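/- arXiv:1801.01521 — 3 statements merged into one kernel-verified Lean document; each statement's English description precedes it below -/
import Mathlib

section
/- Let α, c > 0 and let r be an integer with 0 ≤ r < α. Let Z be a non-negative random variable with P(Z > t) = (c + o(1)) t^{-α} as t → ∞, and set h_r = E[Z^r] (which is finite), assumed positive. Let Λ_Z^{(r)} be the integer-valued random variable with distribution P(Λ_Z^{(r)} = k) = h_r^{-1} E[e^{-Z} Z^{k+r} / k!] for k = 0,1,2,.... Then P(Λ_Z^{(r)} > t) = (1 + o(1)) h_r^{-1} E[Z^r · 1{Z > t}] = (1 + o(1)) h_r^{-1} c · (α/(α − r)) · t^{r−α} as t → ∞. -/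
open MeasureTheory ProbabilityTheory Filter Real Topology

open Finset Set

set_option maxHeartbeats 1000000



noncomputable def expHead (n : ℕ) (z : ℝ) : ℝ := ∑ k ∈ Finset.range n, z ^ k / k.factorial

lemma hasSum_exp' (z : ℝ) : HasSum (fun k : ℕ => z ^ k / k.factorial) (Real.exp z) := by
  have := (Real.summable_pow_div_factorial z).hasSum
  rwa [show ∑' n : ℕ, z ^ n / n.factorial = Real.exp z from by
    rw [Real.exp_eq_exp_ℝ, NormedSpace.exp_eq_tsum_div]] at this

lemma hasSum_expTail (n : ℕ) (z : ℝ) :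
    HasSum (fun j : ℕ => z ^ (j + n) / (j + n).factorial) (Real.exp z - expHead n z) := by
  rw [hasSum_nat_add_iff (f := fun k : ℕ => z ^ k / k.factorial) n]
  have : Real.exp z - expHead n z + ∑ i ∈ Finset.range n, z ^ i / i.factorial = Real.exp z := by
    simp [expHead]
  rw [this]
  exact hasSum_exp' z

lemma expHead_nonneg {z : ℝ} (hz : 0 ≤ z) (n : ℕ) : 0 ≤ expHead n z :=
  Finset.sum_nonneg fun k _ => div_nonneg (pow_nonneg hz k) (Nat.cast_nonneg _)

lemma expTail_nonneg {z : ℝ} (hz : 0 ≤ z) (n : ℕ) : 0 ≤ Real.exp z - expHead n z := by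
  have := (hasSum_expTail n z).tsum_eq
  rw [← this]
  exact tsum_nonneg fun j => div_nonneg (pow_nonneg hz _) (Nat.cast_nonneg _)

lemma expHead_le_exp {z : ℝ} (hz : 0 ≤ z) (n : ℕ) : expHead n z ≤ Real.exp z := by
  linarith [expTail_nonneg hz n]

lemma chernoff_upper {θ z : ℝ} (hθ : 0 ≤ θ) (hz : 0 ≤ z) (n : ℕ) :
    Real.exp (-z) * (Real.exp z - expHead n z) ≤ Real.exp (z * (Real.exp θ - 1) - θ * n) := by
  have h1 : Real.exp z - expHead n z
      ≤ Real.exp (-(θ * n)) * (Real.exp (z * Real.exp θ) - expHead n (z * Real.exp θ)) := by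
    rw [← (hasSum_expTail n z).tsum_eq, ← (hasSum_expTail n (z * Real.exp θ)).tsum_eq,
      ← tsum_mul_left]
    refine Summable.tsum_le_tsum (fun j => ?_) (hasSum_expTail n z).summable
      ((hasSum_expTail n (z * Real.exp θ)).summable.mul_left _)
    have hpow : z ^ (j + n) ≤ Real.exp (-(θ * n)) * (z * Real.exp θ) ^ (j + n) := by
      rw [mul_pow, ← Real.exp_nat_mul]
      have h2 : (1 : ℝ) ≤ Real.exp (-(θ * n)) * Real.exp ((j + n : ℕ) * θ) := by
        rw [← Real.exp_add]
        refine Real.one_le_exp ?_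
        push_cast
        nlinarith [mul_nonneg hθ (Nat.cast_nonneg (α := ℝ) j)]
      calc z ^ (j + n) = 1 * z ^ (j + n) := by ring
        _ ≤ (Real.exp (-(θ * n)) * Real.exp ((j + n : ℕ) * θ)) * z ^ (j + n) :=
            mul_le_mul_of_nonneg_right h2 (pow_nonneg hz _)
        _ = Real.exp (-(θ * n)) * (z ^ (j + n) * Real.exp ((j + n : ℕ) * θ)) := by ring
    calc z ^ (j + n) / (j + n).factorial
        ≤ (Real.exp (-(θ * n)) * (z * Real.exp θ) ^ (j + n)) / (j + n).factorial := by
          gcongr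
      _ = Real.exp (-(θ * n)) * ((z * Real.exp θ) ^ (j + n) / (j + n).factorial) := by ring
  have h2 : Real.exp (z * Real.exp θ) - expHead n (z * Real.exp θ) ≤ Real.exp (z * Real.exp θ) := by
    have : 0 ≤ expHead n (z * Real.exp θ) :=
      expHead_nonneg (mul_nonneg hz (Real.exp_nonneg θ)) n
    linarith
  calc Real.exp (-z) * (Real.exp z - expHead n z)
      ≤ Real.exp (-z) * (Real.exp (-(θ * n)) * Real.exp (z * Real.exp θ)) := by
        refine mul_le_mul_of_nonneg_left ?_ (Real.exp_nonneg _)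
        refine h1.trans ?_
        exact mul_le_mul_of_nonneg_left h2 (Real.exp_nonneg _)
    _ = Real.exp (z * (Real.exp θ - 1) - θ * n) := by
        rw [← Real.exp_add, ← Real.exp_add]; ring_nf

lemma chernoff_lower {θ z : ℝ} (hθ : 0 ≤ θ) (hz : 0 ≤ z) (n : ℕ) :
    Real.exp (-z) * expHead n z ≤ Real.exp (θ * n + z * (Real.exp (-θ) - 1)) := by
  have h1 : expHead n z ≤ Real.exp (θ * n) * expHead n (z * Real.exp (-θ)) := by
    unfold expHead
    rw [Finset.mul_sum]
    refine Finset.sum_le_sum fun k hk => ?_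
    have hk' : (k : ℝ) ≤ n := by
      have := Finset.mem_range.mp hk; exact_mod_cast this.le
    have hpow : z ^ k ≤ Real.exp (θ * n) * (z * Real.exp (-θ)) ^ k := by
      rw [mul_pow, ← Real.exp_nat_mul]
      have h2 : (1 : ℝ) ≤ Real.exp (θ * n) * Real.exp ((k : ℕ) * -θ) := by
        rw [← Real.exp_add]
        refine Real.one_le_exp ?_
        nlinarith [mul_nonneg hθ (Nat.cast_nonneg (α := ℝ) k)]
      calc z ^ k = 1 * z ^ k := by ring
        _ ≤ (Real.exp (θ * n) * Real.exp ((k : ℕ) * -θ)) * z ^ k :=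
            mul_le_mul_of_nonneg_right h2 (pow_nonneg hz _)
        _ = Real.exp (θ * n) * (z ^ k * Real.exp ((k : ℕ) * -θ)) := by ring
    calc z ^ k / k.factorial
        ≤ (Real.exp (θ * n) * (z * Real.exp (-θ)) ^ k) / k.factorial := by gcongr
      _ = Real.exp (θ * n) * ((z * Real.exp (-θ)) ^ k / k.factorial) := by ring
  have h2 : expHead n (z * Real.exp (-θ)) ≤ Real.exp (z * Real.exp (-θ)) :=
    expHead_le_exp (mul_nonneg hz (Real.exp_nonneg _)) n
  calc Real.exp (-z) * expHead n z
      ≤ Real.exp (-z) * (Real.exp (θ * n) * Real.exp (z * Real.exp (-θ))) := by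
        refine mul_le_mul_of_nonneg_left ?_ (Real.exp_nonneg _)
        exact h1.trans (mul_le_mul_of_nonneg_left h2 (Real.exp_nonneg _))
    _ = Real.exp (θ * n + z * (Real.exp (-θ) - 1)) := by
        rw [← Real.exp_add, ← Real.exp_add]; ring_nf

noncomputable def pG (n : ℕ) (z : ℝ) : ℝ := 1 - Real.exp (-z) * expHead n z

lemma pG_eq (n : ℕ) (z : ℝ) : pG n z = Real.exp (-z) * (Real.exp z - expHead n z) := by
  unfold pG
  rw [mul_sub, ← Real.exp_add]
  simp

lemma pG_nonneg {z : ℝ} (hz : 0 ≤ z) (n : ℕ) : 0 ≤ pG n z := by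
  rw [pG_eq]
  exact mul_nonneg (Real.exp_nonneg _) (by linarith [expHead_le_exp hz n])

lemma pG_le_one {z : ℝ} (hz : 0 ≤ z) (n : ℕ) : pG n z ≤ 1 := by
  unfold pG
  nlinarith [expHead_nonneg hz n, Real.exp_nonneg (-z)]

lemma log_one_sub_neg {ε : ℝ} (hε0 : 0 < ε) (hε1 : ε < 1) : ε + Real.log (1 - ε) < 0 := by
  have := Real.log_lt_sub_one_of_pos (x := 1 - ε) (by linarith) (by linarith [hε0])
  linarith

lemma log_one_add_lt {ε : ℝ} (hε0 : 0 < ε) : Real.log (1 + ε) < ε := by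
  have := Real.log_lt_sub_one_of_pos (x := 1 + ε) (by linarith) (by linarith)
  linarith

lemma pG_le_of_le {ε t : ℝ} (hε0 : 0 < ε) (hε1 : ε < 1) (ht : 0 ≤ t) {n : ℕ} (hn : t ≤ n)
    {z : ℝ} (hz : 0 ≤ z) (hzt : z ≤ (1 - ε) * t) :
    pG n z ≤ Real.exp ((ε + Real.log (1 - ε)) * t) := by
  set θ : ℝ := -Real.log (1 - ε) with hθdef
  have h1ε : (0:ℝ) < 1 - ε := by linarith
  have hθ0 : 0 ≤ θ := by
    simp only [hθdef, neg_nonneg]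
    exact Real.log_nonpos (by linarith) (by linarith)
  have heθ : Real.exp θ = (1 - ε)⁻¹ := by
    rw [hθdef, Real.exp_neg, Real.exp_log h1ε]
  rw [pG_eq]
  refine (chernoff_upper hθ0 hz n).trans ?_
  refine Real.exp_le_exp.mpr ?_
  have h1 : z * (Real.exp θ - 1) ≤ ε * t := by
    have hfac : 0 ≤ Real.exp θ - 1 := by
      rw [heθ]
      rw [le_sub_iff_add_le, zero_add, le_inv_comm₀] <;> [skip; norm_num; exact h1ε] <;> linarith
    calc z * (Real.exp θ - 1) ≤ (1 - ε) * t * (Real.exp θ - 1) :=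
          mul_le_mul_of_nonneg_right hzt hfac
      _ = ε * t := by rw [heθ]; field_simp; ring
  have h2 : θ * t ≤ θ * n := mul_le_mul_of_nonneg_left hn hθ0
  have : z * (Real.exp θ - 1) - θ * n ≤ ε * t - θ * t := by linarith
  refine this.trans ?_
  rw [hθdef]; ring_nf
  linarith

lemma one_sub_pG_le {ε t : ℝ} (hε0 : 0 < ε) (ht : 0 ≤ t) {n : ℕ} (hn : (n : ℝ) ≤ t + 1)
    {z : ℝ} (hzt : (1 + ε) * t ≤ z) :
    1 - pG n z ≤ (1 + ε) * Real.exp ((Real.log (1 + ε) - ε) * t) := by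
  have hz : 0 ≤ z := le_trans (by positivity) hzt
  set θ : ℝ := Real.log (1 + ε) with hθdef
  have h1ε : (0:ℝ) < 1 + ε := by linarith
  have hθ0 : 0 ≤ θ := Real.log_nonneg (by linarith)
  have heθ : Real.exp (-θ) = (1 + ε)⁻¹ := by
    rw [hθdef, Real.exp_neg, Real.exp_log h1ε]
  have key : 1 - pG n z = Real.exp (-z) * expHead n z := by unfold pG; ring
  rw [key]
  refine (chernoff_lower hθ0 hz n).trans ?_
  have h1 : z * (Real.exp (-θ) - 1) ≤ -(ε * t) := by
    have hfac : Real.exp (-θ) - 1 ≤ 0 := by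
      rw [heθ]
      simp only [sub_nonpos]
      rw [inv_le_one_iff₀]; right; linarith
    calc z * (Real.exp (-θ) - 1) ≤ (1 + ε) * t * (Real.exp (-θ) - 1) := by
          exact mul_le_mul_of_nonpos_right hzt hfac
      _ = -(ε * t) := by rw [heθ]; field_simp; ring
  have h2 : θ * n ≤ θ * (t + 1) := mul_le_mul_of_nonneg_left hn hθ0
  calc Real.exp (θ * n + z * (Real.exp (-θ) - 1))
      ≤ Real.exp (θ * (t + 1) + -(ε * t)) := Real.exp_le_exp.mpr (by linarith)
    _ = (1 + ε) * Real.exp ((Real.log (1 + ε) - ε) * t) := by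
        rw [show θ * (t + 1) + -(ε * t) = θ + (θ - ε) * t by ring, Real.exp_add, hθdef,
          Real.exp_log h1ε]


lemma hasSum_poisson (n r : ℕ) (z : ℝ) :
    HasSum (fun j : ℕ => Real.exp (-z) * z ^ (j + n + r) / ((j + n).factorial : ℝ))
      (z ^ r * pG n z) := by
  have h := (hasSum_expTail n z).mul_left (Real.exp (-z) * z ^ r)
  have heq : (fun j : ℕ => Real.exp (-z) * z ^ r * (z ^ (j + n) / (j + n).factorial))
      = fun j : ℕ => Real.exp (-z) * z ^ (j + n + r) / ((j + n).factorial : ℝ) := by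
    funext j; rw [pow_add]; ring
  rw [heq] at h
  have : Real.exp (-z) * z ^ r * (Real.exp z - expHead n z) = z ^ r * pG n z := by
    rw [pG_eq]; ring
  rwa [this] at h

lemma poisson_term_le {z : ℝ} (hz : 0 ≤ z) (k r : ℕ) :
    Real.exp (-z) * z ^ (k + r) / (k.factorial : ℝ) ≤ z ^ r := by
  have h1 : z ^ k / (k.factorial : ℝ) ≤ Real.exp z := by
    have := expHead_le_exp hz (k + 1)
    refine le_trans ?_ this
    unfold expHead
    exact Finset.single_le_sum (f := fun i => z ^ i / (i.factorial : ℝ))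
      (fun i _ => div_nonneg (pow_nonneg hz i) (Nat.cast_nonneg _)) (Finset.self_mem_range_succ k)
  have h2 : Real.exp (-z) * z ^ (k + r) / (k.factorial : ℝ)
      = (Real.exp (-z) * (z ^ k / k.factorial)) * z ^ r := by
    rw [pow_add]; ring
  rw [h2]
  have h3 : Real.exp (-z) * (z ^ k / ↑k.factorial) ≤ 1 := by
    calc Real.exp (-z) * (z ^ k / ↑k.factorial) ≤ Real.exp (-z) * Real.exp z :=
          mul_le_mul_of_nonneg_left h1 (Real.exp_nonneg _)
      _ = 1 := by rw [← Real.exp_add]; simp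
  nlinarith [pow_nonneg hz r, Real.exp_nonneg (-z),
    div_nonneg (pow_nonneg hz k) (Nat.cast_nonneg (α := ℝ) k.factorial)]

lemma interchange {Ω : Type*} [MeasureSpace Ω]
    (Z : Ω → ℝ) (hZmeas : Measurable Z) (hZnn : ∀ ω, 0 ≤ Z ω) (r : ℕ)
    (hInt : Integrable (fun ω => Z ω ^ r)) (n : ℕ) :
    Integrable (fun ω => Z ω ^ r * pG n (Z ω)) ∧
    ∑' j : ℕ, ENNReal.ofReal (∫ ω, Real.exp (-Z ω) * Z ω ^ (j + n + r) / ((j + n).factorial : ℝ))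
      = ENNReal.ofReal (∫ ω, Z ω ^ r * pG n (Z ω)) := by
  have hpgZ_meas : Measurable fun ω => Z ω ^ r * pG n (Z ω) := by
    unfold pG expHead
    fun_prop
  have hpg_nonneg : ∀ ω, 0 ≤ Z ω ^ r * pG n (Z ω) := fun ω =>
    mul_nonneg (pow_nonneg (hZnn ω) r) (pG_nonneg (hZnn ω) n)
  have hint1 : Integrable (fun ω => Z ω ^ r * pG n (Z ω)) := by
    refine hInt.mono' hpgZ_meas.aestronglyMeasurable (ae_of_all _ fun ω => ?_)
    rw [Real.norm_eq_abs, abs_of_nonneg (hpg_nonneg ω)]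
    calc Z ω ^ r * pG n (Z ω) ≤ Z ω ^ r * 1 :=
          mul_le_mul_of_nonneg_left (pG_le_one (hZnn ω) n) (pow_nonneg (hZnn ω) r)
      _ = Z ω ^ r := by ring
  refine ⟨hint1, ?_⟩
  set f : ℕ → Ω → ℝ := fun j ω => Real.exp (-Z ω) * Z ω ^ (j + n + r) / ((j + n).factorial : ℝ)
    with hf
  have hf_meas : ∀ j, Measurable (f j) := by intro j; fun_prop
  have hf_nonneg : ∀ j ω, 0 ≤ f j ω := fun j ω =>
    div_nonneg (mul_nonneg (Real.exp_nonneg _) (pow_nonneg (hZnn ω) _)) (Nat.cast_nonneg _)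
  have hf_int : ∀ j, Integrable (f j) := by
    intro j
    refine hInt.mono' (hf_meas j).aestronglyMeasurable (ae_of_all _ fun ω => ?_)
    rw [Real.norm_eq_abs, abs_of_nonneg (hf_nonneg j ω)]
    exact poisson_term_le (hZnn ω) (j + n) r
  calc ∑' j, ENNReal.ofReal (∫ ω, f j ω)
      = ∑' j, ∫⁻ ω, ENNReal.ofReal (f j ω) := by
        refine tsum_congr fun j => ?_
        exact ofReal_integral_eq_lintegral_ofReal (hf_int j) (ae_of_all _ (hf_nonneg j))
    _ = ∫⁻ ω, ∑' j, ENNReal.ofReal (f j ω) := by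
        exact (lintegral_tsum fun j => (ENNReal.measurable_ofReal.comp (hf_meas j)).aemeasurable).symm
    _ = ∫⁻ ω, ENNReal.ofReal (Z ω ^ r * pG n (Z ω)) := by
        refine lintegral_congr fun ω => ?_
        rw [← ENNReal.ofReal_tsum_of_nonneg (hf_nonneg · ω)
          (hasSum_poisson n r (Z ω)).summable, (hasSum_poisson n r (Z ω)).tsum_eq]
    _ = ENNReal.ofReal (∫ ω, Z ω ^ r * pG n (Z ω)) :=
        (ofReal_integral_eq_lintegral_ofReal hint1 (ae_of_all _ hpg_nonneg)).symm

lemma meas_nat_ge_eq {Ω' : Type*} [MeasureSpace Ω'] [IsProbabilityMeasure (ℙ : Measure Ω')]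
    (Λ : Ω' → ℕ) (htot : ∑' k, (ℙ {ω' | Λ ω' = k}) = 1) (n : ℕ) :
    ℙ {ω' | n ≤ Λ ω'} = ∑' j, ℙ {ω' | Λ ω' = j + n} := by
  set q : ℕ → ENNReal := fun k => ℙ {ω' | Λ ω' = k} with hq
  have hsplit : ∑ k ∈ Finset.range n, q k + ∑' j, q (j + n) = 1 := by
    rw [Summable.sum_add_tsum_nat_add' ENNReal.summable]; exact htot
  have hA_le : ℙ {ω' | n ≤ Λ ω'} ≤ ∑' j, q (j + n) := by
    have h : {ω' | n ≤ Λ ω'} = ⋃ j : ℕ, {ω' | Λ ω' = j + n} := by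
      ext ω'; simp only [Set.mem_setOf_eq, Set.mem_iUnion]
      exact ⟨fun h => ⟨Λ ω' - n, by omega⟩, fun ⟨j, hj⟩ => by omega⟩
    rw [h]; exact measure_iUnion_le _
  have hAc_le : ℙ {ω' | n ≤ Λ ω'}ᶜ ≤ ∑ k ∈ Finset.range n, q k := by
    have h : {ω' | n ≤ Λ ω'}ᶜ = ⋃ k ∈ Finset.range n, {ω' | Λ ω' = k} := by
      ext ω'; simp only [Set.mem_compl_iff, Set.mem_setOf_eq, Set.mem_iUnion, Finset.mem_range]
      exact ⟨fun h => ⟨Λ ω', by omega, rfl⟩, fun ⟨k, hk, hkk⟩ => by omega⟩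
    rw [h]; exact measure_biUnion_finset_le _ _
  refine le_antisymm hA_le ?_
  have h1 : ∑ k ∈ Finset.range n, q k + ∑' j, q (j + n)
      ≤ ℙ {ω' | n ≤ Λ ω'} + ∑ k ∈ Finset.range n, q k := by
    rw [hsplit]
    calc (1:ENNReal) = ℙ ({ω' | n ≤ Λ ω'} ∪ {ω' | n ≤ Λ ω'}ᶜ) := by
          rw [Set.union_compl_self]; simp
      _ ≤ ℙ {ω' | n ≤ Λ ω'} + ℙ {ω' | n ≤ Λ ω'}ᶜ := measure_union_le _ _
      _ ≤ _ := by gcongr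
  rw [add_comm (∑ k ∈ Finset.range n, q k)] at h1
  have hfin : ∑ k ∈ Finset.range n, q k ≠ ⊤ :=
    (ENNReal.sum_lt_top.mpr fun k _ => measure_lt_top _ _).ne
  exact (ENNReal.add_le_add_iff_right hfin).mp h1

lemma tendsto_of_approx {f : ℝ → ℝ} {L : ℝ}
    (h : ∀ ε > (0:ℝ), ∀ᶠ t in atTop, |f t - L| ≤ ε) : Tendsto f atTop (𝓝 L) := by
  rw [Metric.tendsto_nhds]
  intro ε hε
  filter_upwards [h (ε/2) (by linarith)] with t ht
  rw [Real.dist_eq]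
  linarith

section TailMoment
variable {Ω : Type*} [MeasureSpace Ω] [IsProbabilityMeasure (ℙ : Measure Ω)]
  {α c : ℝ} {r : ℕ} {Z : Ω → ℝ}

-- layer cake identity
lemma layercake_id (hα : 0 < α) (hr1 : 1 ≤ r) (hZmeas : Measurable Z) (hZnn : ∀ ω, 0 ≤ Z ω)
    (hInt : Integrable (fun ω => Z ω ^ r)) {t : ℝ} (ht : 0 < t) :
    ENNReal.ofReal (∫ ω in {ω | t < Z ω}, Z ω ^ r)
      = ENNReal.ofReal (r : ℝ) * (ℙ {ω | t < Z ω} * ENNReal.ofReal (t ^ (r:ℝ) / r)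
        + ∫⁻ s in Set.Ioi t, ℙ {ω | s < Z ω} * ENNReal.ofReal (s ^ ((r:ℝ) - 1))) := by
  have hrR : (1:ℝ) ≤ (r:ℝ) := by exact_mod_cast hr1
  have hmeas_s : ∀ s : ℝ, MeasurableSet {ω | s < Z ω} := fun s =>
    measurableSet_lt measurable_const hZmeas
  have lc := lintegral_rpow_eq_lintegral_meas_lt_mul ((ℙ : Measure Ω).restrict {ω | t < Z ω})
    (ae_of_all _ hZnn) hZmeas.aemeasurable (p := (r:ℝ)) (by linarith)
  -- LHS of lc
  have hLHS : ∫⁻ ω, ENNReal.ofReal (Z ω ^ (r:ℝ)) ∂((ℙ : Measure Ω).restrict {ω | t < Z ω})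
      = ENNReal.ofReal (∫ ω in {ω | t < Z ω}, Z ω ^ r) := by
    rw [← ofReal_integral_eq_lintegral_ofReal
      ((hInt.integrableOn).congr_fun (fun ω _ => (Real.rpow_natCast (Z ω) r).symm) (hmeas_s t))
      (ae_of_all _ fun ω => Real.rpow_nonneg (hZnn ω) _)]
    congr 1
    exact setIntegral_congr_fun (hmeas_s t) fun ω _ => Real.rpow_natCast (Z ω) r
  rw [hLHS] at lc
  rw [lc]
  congr 1
  -- restricted measures
  have hres : ∀ s : ℝ, ((ℙ : Measure Ω).restrict {ω | t < Z ω}) {ω' | s < Z ω'} = ℙ {ω | max s t < Z ω} := by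
    intro s
    rw [Measure.restrict_apply (hmeas_s s)]
    congr 1
    ext ω; simp [max_lt_iff]
  calc ∫⁻ s in Set.Ioi 0, ((ℙ : Measure Ω).restrict {ω | t < Z ω}) {a | s < Z a} * ENNReal.ofReal (s ^ ((r:ℝ)-1))
      = ∫⁻ s in Set.Ioc 0 t ∪ Set.Ioi t,
          ℙ {ω | max s t < Z ω} * ENNReal.ofReal (s ^ ((r:ℝ)-1)) := by
        rw [Set.Ioc_union_Ioi_eq_Ioi ht.le]
        exact lintegral_congr fun s => by rw [hres s]
    _ = (∫⁻ s in Set.Ioc 0 t, ℙ {ω | max s t < Z ω} * ENNReal.ofReal (s ^ ((r:ℝ)-1)))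
        + ∫⁻ s in Set.Ioi t, ℙ {ω | max s t < Z ω} * ENNReal.ofReal (s ^ ((r:ℝ)-1)) :=
        lintegral_union measurableSet_Ioi (Set.Ioc_disjoint_Ioi le_rfl)
    _ = ℙ {ω | t < Z ω} * ENNReal.ofReal (t ^ (r:ℝ) / r)
        + ∫⁻ s in Set.Ioi t, ℙ {ω | s < Z ω} * ENNReal.ofReal (s ^ ((r:ℝ)-1)) := by
        congr 1
        · rw [setLIntegral_congr_fun measurableSet_Ioc
            (fun s hs => by rw [max_eq_right hs.2])]
          rw [lintegral_const_mul _ (by fun_prop)]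
          congr 1
          have hint : IntegrableOn (fun s : ℝ => s ^ ((r:ℝ)-1)) (Set.Ioc 0 t) :=
            (intervalIntegrable_iff_integrableOn_Ioc_of_le ht.le).mp
              (intervalIntegral.intervalIntegrable_rpow (Or.inl (by linarith)))
          rw [← ofReal_integral_eq_lintegral_ofReal hint
            ((ae_restrict_iff' measurableSet_Ioc).mpr
              (ae_of_all _ fun s hs => Real.rpow_nonneg hs.1.le _))]
          congr 1
          rw [← intervalIntegral.integral_of_le ht.le,
            _root_.integral_rpow (Or.inl (by linarith : (-1:ℝ) < (r:ℝ) - 1))]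
          rw [sub_add_cancel, Real.zero_rpow (by positivity)]
          ring
        · exact setLIntegral_congr_fun measurableSet_Ioi
            (fun s hs => by rw [max_eq_left (le_of_lt hs)])


lemma J_bounds (hα : 0 < α) (hc : 0 < c) (hr : (r : ℝ) < α) (hZmeas : Measurable Z)
    (hTail : Tendsto (fun t : ℝ => (ℙ {ω | t < Z ω}).toReal * t ^ α) atTop (𝓝 c))
    {ε : ℝ} (hε0 : 0 < ε) (hεc : ε < c) :
    ∀ᶠ t in atTop,
      ENNReal.ofReal ((c - ε) * (t ^ ((r:ℝ) - α) / (α - r)))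
        ≤ (∫⁻ s in Set.Ioi t, ℙ {ω | s < Z ω} * ENNReal.ofReal (s ^ ((r:ℝ) - 1)))
      ∧ (∫⁻ s in Set.Ioi t, ℙ {ω | s < Z ω} * ENNReal.ofReal (s ^ ((r:ℝ) - 1)))
        ≤ ENNReal.ofReal ((c + ε) * (t ^ ((r:ℝ) - α) / (α - r))) := by
  have hαr : (0:ℝ) < α - r := by linarith
  obtain ⟨N, hN⟩ := Metric.tendsto_atTop.mp hTail ε hε0
  filter_upwards [eventually_ge_atTop (max N 1)] with t ht
  have ht1 : (1:ℝ) ≤ t := le_trans (le_max_right _ _) ht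
  have ht0 : (0:ℝ) < t := by linarith
  have htN : N ≤ t := le_trans (le_max_left _ _) ht
  have hFs : ∀ s : ℝ, t < s → c - ε ≤ (ℙ {ω | s < Z ω}).toReal * s ^ α
      ∧ (ℙ {ω | s < Z ω}).toReal * s ^ α ≤ c + ε := by
    intro s hs
    have := hN s (by linarith)
    rw [Real.dist_eq, abs_lt] at this
    constructor <;> linarith [this.1, this.2]
  have hexp : ((r:ℝ) - 1 - α) < -1 := by linarith
  have hanti : Antitone fun s : ℝ => ℙ {ω | s < Z ω} := by
    intro a b hab
    exact measure_mono fun ω (h : b < Z ω) => lt_of_le_of_lt hab h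
  have hFmeas : Measurable fun s : ℝ => (ℙ {ω | s < Z ω}).toReal :=
    hanti.measurable.ennreal_toReal
  have hbigmeas : Measurable fun s : ℝ =>
      ENNReal.ofReal ((ℙ {ω | s < Z ω}).toReal * s ^ α * s ^ ((r:ℝ) - 1 - α)) :=
    ENNReal.measurable_ofReal.comp
      (((hFmeas.mul (measurable_id.pow_const α)).mul (measurable_id.pow_const _)))
  have hmono : ∀ s : ℝ, s ∈ Set.Ioi t →
      ℙ {ω | s < Z ω} * ENNReal.ofReal (s ^ ((r:ℝ) - 1))
        = ENNReal.ofReal ((ℙ {ω | s < Z ω}).toReal * s ^ α * s ^ ((r:ℝ) - 1 - α)) := by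
    intro s hs
    have hs0 : (0:ℝ) < s := lt_trans ht0 hs
    have harith : (ℙ {ω | s < Z ω}).toReal * s ^ α * s ^ ((r:ℝ) - 1 - α)
        = (ℙ {ω | s < Z ω}).toReal * s ^ ((r:ℝ) - 1) := by
      rw [mul_assoc, ← Real.rpow_add hs0, show α + ((r:ℝ) - 1 - α) = (r:ℝ) - 1 by ring]
    rw [harith, ENNReal.ofReal_mul ENNReal.toReal_nonneg,
      ENNReal.ofReal_toReal (measure_ne_top _ _)]
  -- rewrite the lintegral
  have hJeq : (∫⁻ s in Set.Ioi t, ℙ {ω | s < Z ω} * ENNReal.ofReal (s ^ ((r:ℝ) - 1)))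
      = ∫⁻ s in Set.Ioi t,
          ENNReal.ofReal ((ℙ {ω | s < Z ω}).toReal * s ^ α * s ^ ((r:ℝ) - 1 - α)) :=
    setLIntegral_congr_fun measurableSet_Ioi hmono
  have hIval : ∀ b : ℝ, 0 ≤ b → (∫ s in Set.Ioi t, b * s ^ ((r:ℝ) - 1 - α))
      = b * (t ^ ((r:ℝ) - α) / (α - r)) := by
    intro b hb
    rw [integral_const_mul, integral_Ioi_rpow_of_lt hexp ht0]
    congr 1
    rw [show (r:ℝ) - 1 - α + 1 = (r:ℝ) - α by ring]
    rw [div_eq_div_iff (by linarith : (r:ℝ) - α ≠ 0) (by linarith : α - (r:ℝ) ≠ 0)]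
    ring
  have hIint : ∀ b : ℝ, IntegrableOn (fun s : ℝ => b * s ^ ((r:ℝ) - 1 - α)) (Set.Ioi t) :=
    fun b => (integrableOn_Ioi_rpow_of_lt hexp ht0).const_mul b
  have hIlint : ∀ b : ℝ, 0 ≤ b →
      (∫⁻ s in Set.Ioi t, ENNReal.ofReal (b * s ^ ((r:ℝ) - 1 - α)))
        = ENNReal.ofReal (b * (t ^ ((r:ℝ) - α) / (α - r))) := by
    intro b hb
    rw [← ofReal_integral_eq_lintegral_ofReal (hIint b)
      ((ae_restrict_iff' measurableSet_Ioi).mpr (ae_of_all _ fun s hs =>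
        mul_nonneg hb (Real.rpow_nonneg (le_of_lt (lt_trans ht0 hs)) _))), hIval b hb]
  constructor
  · rw [hJeq, ← hIlint (c - ε) (by linarith)]
    refine setLIntegral_mono hbigmeas fun s hs => ?_
    refine ENNReal.ofReal_le_ofReal ?_
    have hs0 : (0:ℝ) < s := lt_trans ht0 hs
    exact mul_le_mul_of_nonneg_right ((hFs s hs).1) (Real.rpow_nonneg hs0.le _)
  · rw [hJeq, ← hIlint (c + ε) (by linarith)]
    refine setLIntegral_mono (by fun_prop) fun s hs => ?_
    refine ENNReal.ofReal_le_ofReal ?_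
    have hs0 : (0:ℝ) < s := lt_trans ht0 hs
    exact mul_le_mul_of_nonneg_right ((hFs s hs).2) (Real.rpow_nonneg hs0.le _)

lemma tailMoment_asymp {Ω : Type*} [MeasureSpace Ω] [IsProbabilityMeasure (ℙ : Measure Ω)]
    (α c : ℝ) (hα : 0 < α) (hc : 0 < c) (r : ℕ) (hr : (r : ℝ) < α)
    (Z : Ω → ℝ) (hZmeas : Measurable Z) (hZnn : ∀ ω, 0 ≤ Z ω)
    (hTail : Tendsto (fun t : ℝ => (ℙ {ω | t < Z ω}).toReal * t ^ α) atTop (𝓝 c))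
    (hInt : Integrable (fun ω => Z ω ^ r)) :
    Tendsto (fun t : ℝ => (∫ ω in {ω | t < Z ω}, Z ω ^ r) * t ^ (α - (r : ℝ))) atTop
      (𝓝 (c * (α / (α - (r : ℝ))))) := by
  rcases Nat.eq_zero_or_pos r with hr0 | hr1
  · subst hr0
    simp only [pow_zero, Nat.cast_zero, sub_zero]
    have : ∀ t : ℝ, (∫ ω in {ω | t < Z ω}, (1:ℝ)) = (ℙ {ω | t < Z ω}).toReal := by
      intro t
      rw [setIntegral_const, smul_eq_mul, mul_one]
      rfl
    refine Tendsto.congr (fun t => by rw [this t]) ?_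
    convert hTail using 2
    rw [div_self hα.ne']
    ring
  · have hrR : (1:ℝ) ≤ (r:ℝ) := by exact_mod_cast hr1
    have hαr : (0:ℝ) < α - r := by linarith
    set J : ℝ → ENNReal :=
      fun t => ∫⁻ s in Set.Ioi t, ℙ {ω | s < Z ω} * ENNReal.ofReal (s ^ ((r:ℝ) - 1)) with hJdef
    have hJten : Tendsto (fun t => (J t).toReal * t ^ (α - (r:ℝ))) atTop (𝓝 (c / (α - r))) := by
      apply tendsto_of_approx
      intro ε hε
      set ε₀ := min (c/2) (ε * (α - r) / 2) with hε₀def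
      have hε₀0 : 0 < ε₀ := lt_min (by linarith) (by positivity)
      have hε₀c : ε₀ < c := lt_of_le_of_lt (min_le_left _ _) (by linarith)
      filter_upwards [J_bounds hα hc hr hZmeas hTail hε₀0 hε₀c, eventually_ge_atTop (1:ℝ)]
        with t hJb ht1
      have ht0 : (0:ℝ) < t := by linarith
      have hne : J t ≠ ⊤ := ne_top_of_le_ne_top ENNReal.ofReal_ne_top hJb.2
      have hup : (J t).toReal ≤ (c + ε₀) * (t ^ ((r:ℝ) - α) / (α - r)) := by
        have h := ENNReal.toReal_mono ENNReal.ofReal_ne_top hJb.2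
        rwa [ENNReal.toReal_ofReal (by positivity)] at h
      have hlo : (c - ε₀) * (t ^ ((r:ℝ) - α) / (α - r)) ≤ (J t).toReal := by
        have h := ENNReal.toReal_mono hne hJb.1
        rwa [ENNReal.toReal_ofReal (mul_nonneg (by linarith) (by positivity))] at h
      have hcancel : t ^ ((r:ℝ) - α) * t ^ (α - (r:ℝ)) = 1 := by
        rw [← Real.rpow_add ht0]; norm_num
      have htpos : (0:ℝ) < t ^ (α - (r:ℝ)) := Real.rpow_pos_of_pos ht0 _
      have hub2 : (J t).toReal * t ^ (α - (r:ℝ)) ≤ (c + ε₀) / (α - r) := by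
        calc (J t).toReal * t ^ (α - (r:ℝ))
            ≤ (c + ε₀) * (t ^ ((r:ℝ) - α) / (α - r)) * t ^ (α - (r:ℝ)) :=
              mul_le_mul_of_nonneg_right hup htpos.le
          _ = (c + ε₀) / (α - r) * (t ^ ((r:ℝ) - α) * t ^ (α - (r:ℝ))) := by ring
          _ = (c + ε₀) / (α - r) := by rw [hcancel]; ring
      have hlb2 : (c - ε₀) / (α - r) ≤ (J t).toReal * t ^ (α - (r:ℝ)) := by
        calc (c - ε₀) / (α - r)
            = (c - ε₀) / (α - r) * (t ^ ((r:ℝ) - α) * t ^ (α - (r:ℝ))) := by rw [hcancel]; ring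
          _ = (c - ε₀) * (t ^ ((r:ℝ) - α) / (α - r)) * t ^ (α - (r:ℝ)) := by ring
          _ ≤ (J t).toReal * t ^ (α - (r:ℝ)) := mul_le_mul_of_nonneg_right hlo htpos.le
      have hsplit1 : (c + ε₀) / (α - r) = c / (α - r) + ε₀ / (α - r) := by ring
      have hsplit2 : (c - ε₀) / (α - r) = c / (α - r) - ε₀ / (α - r) := by ring
      have hεfin : ε₀ / (α - r) ≤ ε / 2 := by
        rw [div_le_iff₀ hαr]
        calc ε₀ ≤ ε * (α - r) / 2 := min_le_right _ _
          _ = ε / 2 * (α - r) := by ring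
      rw [abs_le]
      constructor <;> linarith
    have hmeas_t : ∀ s : ℝ, MeasurableSet {ω | s < Z ω} := fun s =>
      measurableSet_lt measurable_const hZmeas
    have hSev : ∀ᶠ t in atTop, (∫ ω in {ω | t < Z ω}, Z ω ^ r) * t ^ (α - (r:ℝ))
        = (ℙ {ω | t < Z ω}).toReal * t ^ α + (r:ℝ) * ((J t).toReal * t ^ (α - (r:ℝ))) := by
      filter_upwards [J_bounds hα hc hr hZmeas hTail (ε := c/2) (by linarith) (by linarith),
        eventually_ge_atTop (1:ℝ)] with t hJb ht1
      have ht0 : (0:ℝ) < t := by linarith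
      have hne : J t ≠ ⊤ := ne_top_of_le_ne_top ENNReal.ofReal_ne_top hJb.2
      have hid := layercake_id hα hr1 hZmeas hZnn hInt ht0
      have hS_nonneg : 0 ≤ ∫ ω in {ω | t < Z ω}, Z ω ^ r :=
        setIntegral_nonneg (hmeas_t t) fun ω _ => pow_nonneg (hZnn ω) r
      have hkey := congrArg ENNReal.toReal hid
      rw [ENNReal.toReal_ofReal hS_nonneg, ENNReal.toReal_mul,
        ENNReal.toReal_add (ENNReal.mul_ne_top (measure_ne_top _ _) ENNReal.ofReal_ne_top) hne,
        ENNReal.toReal_mul, ENNReal.toReal_ofReal (by positivity : (0:ℝ) ≤ (r:ℝ)),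
        ENNReal.toReal_ofReal (by positivity)] at hkey
      rw [hkey]
      have ht_r : t ^ (r:ℝ) * t ^ (α - (r:ℝ)) = t ^ α := by
        rw [← Real.rpow_add ht0]; ring_nf
      have hr0 : (r:ℝ) ≠ 0 := by linarith
      calc (r:ℝ) * ((ℙ {ω | t < Z ω}).toReal * (t ^ (r:ℝ) / r) + (J t).toReal) * t ^ (α - (r:ℝ))
          = (ℙ {ω | t < Z ω}).toReal * (t ^ (r:ℝ) * t ^ (α - (r:ℝ)))
            + (r:ℝ) * ((J t).toReal * t ^ (α - (r:ℝ))) := by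
            field_simp
        _ = (ℙ {ω | t < Z ω}).toReal * t ^ α + (r:ℝ) * ((J t).toReal * t ^ (α - (r:ℝ))) := by
            rw [ht_r]
    have hfinal := hTail.add (hJten.const_mul (r:ℝ))
    have harith : c + (r:ℝ) * (c / (α - r)) = c * (α / (α - r)) := by
      field_simp
      ring
    rw [harith] at hfinal
    exact hfinal.congr' (hSev.mono fun t h => h.symm)

end TailMoment

/-- second part of Lemma 3.  Let `α, c > 0`, let `r` be an
integer with `0 ≤ r < α`, let `Z ≥ 0` satisfy `P(Z > t) = (c + o(1)) t^{-α}`,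
and let `h_r = E Z^r ∈ (0, ∞)`.  If `Λ_Z^{(r)}` is integer valued with
`P(Λ_Z^{(r)} = k) = h_r⁻¹ E(e^{-Z} Z^{k+r}/k!)`, then
`P(Λ_Z^{(r)} > t) = (1 + o(1)) h_r⁻¹ E(Z^r 1_{Z > t})
                  = (1 + o(1)) h_r⁻¹ c (α/(α−r)) t^{r−α}` as `t → ∞`. -/
theorem statement4 {Ω : Type*} [MeasureSpace Ω] [IsProbabilityMeasure (ℙ : Measure Ω)]
    {Ω' : Type*} [MeasureSpace Ω'] [IsProbabilityMeasure (ℙ : Measure Ω')]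
    (α c : ℝ) (hα : 0 < α) (hc : 0 < c) (r : ℕ) (hr : (r : ℝ) < α)
    (Z : Ω → ℝ) (hZmeas : Measurable Z) (hZnn : ∀ ω, 0 ≤ Z ω)
    (hTail : Tendsto (fun t : ℝ => (ℙ {ω | t < Z ω}).toReal * t ^ α) atTop (𝓝 c))
    (hInt : Integrable (fun ω => Z ω ^ r))
    (hpos : 0 < ∫ ω, Z ω ^ r)
    (Λ : Ω' → ℕ)
    (hΛ : ∀ k : ℕ, (ℙ {ω' | Λ ω' = k}).toReal =
      (∫ ω, Z ω ^ r)⁻¹ * ∫ ω, Real.exp (-Z ω) * Z ω ^ (k + r) / (k.factorial : ℝ)) :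
    Tendsto (fun t : ℝ => (ℙ {ω' | t < (Λ ω' : ℝ)}).toReal /
        ((∫ ω, Z ω ^ r)⁻¹ * ∫ ω in {ω | t < Z ω}, Z ω ^ r))
      atTop (𝓝 1) ∧
    Tendsto (fun t : ℝ => (ℙ {ω' | t < (Λ ω' : ℝ)}).toReal * t ^ (α - (r : ℝ)))
      atTop (𝓝 ((∫ ω, Z ω ^ r)⁻¹ * c * (α / (α - (r : ℝ))))) := by
  set h : ℝ := ∫ ω, Z ω ^ r with hh_def
  have hαr : (0:ℝ) < α - r := by linarith
  set K : ℝ := c * (α / (α - (r:ℝ))) with hK_def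
  have hKpos : 0 < K := by
    rw [hK_def]; positivity
  have hhinv : 0 < h⁻¹ := by positivity
  set S : ℝ → ℝ := fun t => ∫ ω in {ω | t < Z ω}, Z ω ^ r with hS_def
  have hmeas_s : ∀ s : ℝ, MeasurableSet {ω | s < Z ω} := fun s =>
    measurableSet_lt measurable_const hZmeas
  -- Lemma A
  have hA : Tendsto (fun t : ℝ => S t * t ^ (α - (r:ℝ))) atTop (𝓝 K) :=
    tailMoment_asymp α c hα hc r hr Z hZmeas hZnn hTail hInt
  -- masses as ENNReal
  have hΛ' : ∀ k : ℕ, ℙ {ω' | Λ ω' = k}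
      = ENNReal.ofReal (h⁻¹ * ∫ ω, Real.exp (-Z ω) * Z ω ^ (k + r) / (k.factorial : ℝ)) := by
    intro k
    rw [← hΛ k, ENNReal.ofReal_toReal (measure_ne_top _ _)]
  have hΦ_nonneg : ∀ n : ℕ, 0 ≤ ∫ ω, Z ω ^ r * pG n (Z ω) := fun n =>
    integral_nonneg fun ω => mul_nonneg (pow_nonneg (hZnn ω) r) (pG_nonneg (hZnn ω) n)
  have htsum : ∀ n : ℕ, ∑' j : ℕ, ℙ {ω' | Λ ω' = j + n}
      = ENNReal.ofReal h⁻¹ * ENNReal.ofReal (∫ ω, Z ω ^ r * pG n (Z ω)) := by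
    intro n
    calc ∑' j : ℕ, ℙ {ω' | Λ ω' = j + n}
        = ∑' j : ℕ, ENNReal.ofReal h⁻¹ * ENNReal.ofReal
            (∫ ω, Real.exp (-Z ω) * Z ω ^ (j + n + r) / ((j + n).factorial : ℝ)) := by
          refine tsum_congr fun j => ?_
          rw [hΛ' (j + n), ENNReal.ofReal_mul hhinv.le]
      _ = ENNReal.ofReal h⁻¹ * ∑' j : ℕ, ENNReal.ofReal
            (∫ ω, Real.exp (-Z ω) * Z ω ^ (j + n + r) / ((j + n).factorial : ℝ)) :=
          ENNReal.tsum_mul_left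
      _ = ENNReal.ofReal h⁻¹ * ENNReal.ofReal (∫ ω, Z ω ^ r * pG n (Z ω)) := by
          rw [(interchange Z hZmeas hZnn r hInt n).2]
  have htot : ∑' k : ℕ, ℙ {ω' | Λ ω' = k} = 1 := by
    have h0 := htsum 0
    simp only [add_zero] at h0
    rw [h0]
    have hpG0 : ∀ ω, Z ω ^ r * pG 0 (Z ω) = Z ω ^ r := by
      intro ω
      have : pG 0 (Z ω) = 1 := by unfold pG expHead; simp
      rw [this, mul_one]
    rw [show (∫ ω, Z ω ^ r * pG 0 (Z ω)) = h from by rw [hh_def]; exact integral_congr_ae (ae_of_all _ hpG0)]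
    rw [← ENNReal.ofReal_mul hhinv.le, inv_mul_cancel₀ (ne_of_gt hpos), ENNReal.ofReal_one]
  -- identity for P(Λ > t)
  have hPid : ∀ t : ℝ, 0 ≤ t → (ℙ {ω' | t < (Λ ω' : ℝ)}).toReal
      = h⁻¹ * ∫ ω, Z ω ^ r * pG (⌊t⌋₊ + 1) (Z ω) := by
    intro t ht
    have hsetid : {ω' | t < (Λ ω' : ℝ)} = {ω' | ⌊t⌋₊ + 1 ≤ Λ ω'} := by
      ext ω'
      simp only [Set.mem_setOf_eq]
      rw [← Nat.floor_lt ht]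
      omega
    rw [hsetid, meas_nat_ge_eq Λ htot (⌊t⌋₊ + 1), htsum (⌊t⌋₊ + 1),
      ENNReal.toReal_mul, ENNReal.toReal_ofReal hhinv.le,
      ENNReal.toReal_ofReal (hΦ_nonneg _)]
  -- the two exponential decay rates
  have hδ1 : ∀ ε : ℝ, 0 < ε → ε < 1 → ε + Real.log (1 - ε) < 0 := fun ε h1 h2 =>
    log_one_sub_neg h1 h2
  have hδ2 : ∀ ε : ℝ, 0 < ε → Real.log (1 + ε) - ε < 0 := fun ε h1 => by
    have := log_one_add_lt h1; linarith
  -- sandwich bounds on Φ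
  have hΦub : ∀ ε : ℝ, 0 < ε → ε < 1 → ∀ t : ℝ, 1 ≤ t →
      (∫ ω, Z ω ^ r * pG (⌊t⌋₊ + 1) (Z ω))
        ≤ S ((1 - ε) * t) + Real.exp ((ε + Real.log (1 - ε)) * t) * h := by
    intro ε hε0 hε1 t ht1
    have ht0 : (0:ℝ) ≤ t := by linarith
    set n : ℕ := ⌊t⌋₊ + 1 with hn_def
    have hnt : t ≤ (n : ℝ) := by
      have := Nat.lt_succ_floor t
      rw [hn_def]
      push_cast at this ⊢
      linarith [this.le]
    have hptw : ∀ ω, Z ω ^ r * pG n (Z ω)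
        ≤ Set.indicator {ω | (1 - ε) * t < Z ω} (fun ω => Z ω ^ r) ω
          + Real.exp ((ε + Real.log (1 - ε)) * t) * Z ω ^ r := by
      intro ω
      by_cases hcase : (1 - ε) * t < Z ω
      · rw [Set.indicator_of_mem (show ω ∈ {ω | (1 - ε) * t < Z ω} from hcase)
          (fun ω => Z ω ^ r)]
        have h1 : Z ω ^ r * pG n (Z ω) ≤ Z ω ^ r := by
          nlinarith [pG_le_one (hZnn ω) n, pG_nonneg (hZnn ω) n, pow_nonneg (hZnn ω) r]
        have h2 : 0 ≤ Real.exp ((ε + Real.log (1 - ε)) * t) * Z ω ^ r :=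
          mul_nonneg (Real.exp_nonneg _) (pow_nonneg (hZnn ω) r)
        linarith
      · rw [Set.indicator_of_notMem (show ω ∉ {ω | (1 - ε) * t < Z ω} from hcase)
          (fun ω => Z ω ^ r)]
        push_neg at hcase
        have hbd := pG_le_of_le hε0 hε1 ht0 hnt (hZnn ω) hcase
        have : Z ω ^ r * pG n (Z ω) ≤ Z ω ^ r * Real.exp ((ε + Real.log (1 - ε)) * t) :=
          mul_le_mul_of_nonneg_left hbd (pow_nonneg (hZnn ω) r)
        linarith [this]
    have hint1 : Integrable (fun ω => Z ω ^ r * pG n (Z ω)) :=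
      (interchange Z hZmeas hZnn r hInt n).1
    have hint2 : Integrable (fun ω =>
        Set.indicator {ω | (1 - ε) * t < Z ω} (fun ω => Z ω ^ r) ω
          + Real.exp ((ε + Real.log (1 - ε)) * t) * Z ω ^ r) :=
      (hInt.indicator (hmeas_s _)).add (hInt.const_mul _)
    calc (∫ ω, Z ω ^ r * pG n (Z ω))
        ≤ ∫ ω, (Set.indicator {ω | (1 - ε) * t < Z ω} (fun ω => Z ω ^ r) ω
            + Real.exp ((ε + Real.log (1 - ε)) * t) * Z ω ^ r) :=
          integral_mono hint1 hint2 hptw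
      _ = S ((1 - ε) * t) + Real.exp ((ε + Real.log (1 - ε)) * t) * h := by
          rw [integral_add (hInt.indicator (hmeas_s _)) (hInt.const_mul _),
            integral_indicator (hmeas_s _), integral_const_mul]
  have hΦlb : ∀ ε : ℝ, 0 < ε → ∀ t : ℝ, 1 ≤ t →
      (1 - (1 + ε) * Real.exp ((Real.log (1 + ε) - ε) * t)) * S ((1 + ε) * t)
        ≤ ∫ ω, Z ω ^ r * pG (⌊t⌋₊ + 1) (Z ω) := by
    intro ε hε0 t ht1
    have ht0 : (0:ℝ) ≤ t := by linarith
    set n : ℕ := ⌊t⌋₊ + 1 with hn_def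
    have hnt : (n : ℝ) ≤ t + 1 := by
      have := Nat.floor_le ht0
      rw [hn_def]
      push_cast
      linarith
    set C : ℝ := (1 + ε) * Real.exp ((Real.log (1 + ε) - ε) * t) with hC_def
    have hptw : ∀ ω, (1 - C) * Set.indicator {ω | (1 + ε) * t < Z ω} (fun ω => Z ω ^ r) ω
        ≤ Z ω ^ r * pG n (Z ω) := by
      intro ω
      by_cases hcase : (1 + ε) * t < Z ω
      · rw [Set.indicator_of_mem (show ω ∈ {ω | (1 + ε) * t < Z ω} from hcase)
          (fun ω => Z ω ^ r)]
        have hbd := one_sub_pG_le hε0 ht0 hnt hcase.le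
        have h1 : 1 - C ≤ pG n (Z ω) := by rw [hC_def]; linarith
        calc (1 - C) * Z ω ^ r ≤ pG n (Z ω) * Z ω ^ r :=
              mul_le_mul_of_nonneg_right h1 (pow_nonneg (hZnn ω) r)
          _ = Z ω ^ r * pG n (Z ω) := by ring
      · rw [Set.indicator_of_notMem (show ω ∉ {ω | (1 + ε) * t < Z ω} from hcase)
          (fun ω => Z ω ^ r), mul_zero]
        exact mul_nonneg (pow_nonneg (hZnn ω) r) (pG_nonneg (hZnn ω) n)
    have hint1 : Integrable (fun ω => Z ω ^ r * pG n (Z ω)) :=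
      (interchange Z hZmeas hZnn r hInt n).1
    calc (1 - C) * S ((1 + ε) * t)
        = ∫ ω, (1 - C) * Set.indicator {ω | (1 + ε) * t < Z ω} (fun ω => Z ω ^ r) ω := by
          rw [integral_const_mul, integral_indicator (hmeas_s _)]
      _ ≤ ∫ ω, Z ω ^ r * pG n (Z ω) :=
          integral_mono ((hInt.indicator (hmeas_s _)).const_mul _) hint1 hptw
  -- scaled limits of S
  have hscaled : ∀ a : ℝ, 0 < a →
      Tendsto (fun t : ℝ => S (a * t) * t ^ (α - (r:ℝ))) atTop (𝓝 (K * a ^ ((r:ℝ) - α))) := by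
    intro a ha
    have hcomp : Tendsto (fun t : ℝ => S (a * t) * (a * t) ^ (α - (r:ℝ))) atTop (𝓝 K) :=
      hA.comp (tendsto_id.const_mul_atTop ha)
    have := hcomp.mul_const (a ^ ((r:ℝ) - α))
    refine Tendsto.congr' ?_ (by simpa using this)
    filter_upwards [eventually_gt_atTop (0:ℝ)] with t ht0
    have h1 : (a * t) ^ (α - (r:ℝ)) = a ^ (α - (r:ℝ)) * t ^ (α - (r:ℝ)) :=
      Real.mul_rpow ha.le ht0.le
    have h2 : a ^ (α - (r:ℝ)) * a ^ ((r:ℝ) - α) = 1 := by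
      rw [← Real.rpow_add ha]; norm_num
    calc S (a * t) * (a * t) ^ (α - (r:ℝ)) * a ^ ((r:ℝ) - α)
        = S (a * t) * t ^ (α - (r:ℝ)) * (a ^ (α - (r:ℝ)) * a ^ ((r:ℝ) - α)) := by
          rw [h1]; ring
      _ = S (a * t) * t ^ (α - (r:ℝ)) := by rw [h2, mul_one]
  -- exponential terms tend to zero
  have hexp0 : ∀ b : ℝ, b < 0 →
      Tendsto (fun t : ℝ => Real.exp (b * t) * t ^ (α - (r:ℝ))) atTop (𝓝 0) := by
    intro b hb
    have := tendsto_rpow_mul_exp_neg_mul_atTop_nhds_zero (α - (r:ℝ)) (-b) (by linarith)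
    refine Tendsto.congr (fun t => ?_) this
    rw [neg_neg]
    ring
  -- Goal 2 numerator limit
  have hGoal2 : Tendsto (fun t : ℝ => (ℙ {ω' | t < (Λ ω' : ℝ)}).toReal * t ^ (α - (r:ℝ)))
      atTop (𝓝 (h⁻¹ * K)) := by
    rw [Metric.tendsto_nhds]
    intro δ hδ
    -- choose ε
    have hcont1 : Tendsto (fun ε : ℝ => h⁻¹ * (K * (1 - ε) ^ ((r:ℝ) - α))) (𝓝[>] 0)
        (𝓝 (h⁻¹ * K)) := by
      have hc1 : ContinuousAt (fun ε : ℝ => h⁻¹ * (K * (1 - ε) ^ ((r:ℝ) - α))) 0 := by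
        have : ContinuousAt (fun x : ℝ => x ^ ((r:ℝ) - α)) 1 :=
          Real.continuousAt_rpow_const 1 _ (Or.inl one_ne_zero)
        have h2 : ContinuousAt (fun ε : ℝ => (1 - ε) ^ ((r:ℝ) - α)) 0 := by
          have h3 : ContinuousAt (fun ε : ℝ => 1 - ε) 0 :=
            (continuous_const.sub continuous_id).continuousAt
          exact ContinuousAt.comp (by simpa using this) h3
        exact (continuousAt_const.mul (continuousAt_const.mul h2))
      have := hc1.tendsto
      simp only [sub_zero, Real.one_rpow, mul_one] at this
      exact this.mono_left nhdsWithin_le_nhds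
    have hcont2 : Tendsto (fun ε : ℝ => h⁻¹ * (K * (1 + ε) ^ ((r:ℝ) - α))) (𝓝[>] 0)
        (𝓝 (h⁻¹ * K)) := by
      have hc1 : ContinuousAt (fun ε : ℝ => h⁻¹ * (K * (1 + ε) ^ ((r:ℝ) - α))) 0 := by
        have : ContinuousAt (fun x : ℝ => x ^ ((r:ℝ) - α)) 1 :=
          Real.continuousAt_rpow_const 1 _ (Or.inl one_ne_zero)
        have h2 : ContinuousAt (fun ε : ℝ => (1 + ε) ^ ((r:ℝ) - α)) 0 := by
          have h3 : ContinuousAt (fun ε : ℝ => 1 + ε) 0 :=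
            (continuous_const.add continuous_id).continuousAt
          exact ContinuousAt.comp (by simpa using this) h3
        exact (continuousAt_const.mul (continuousAt_const.mul h2))
      have := hc1.tendsto
      simp only [add_zero, Real.one_rpow, mul_one] at this
      exact this.mono_left nhdsWithin_le_nhds
    have hev : ∀ᶠ ε in 𝓝[>] (0:ℝ),
        h⁻¹ * (K * (1 - ε) ^ ((r:ℝ) - α)) < h⁻¹ * K + δ / 2
        ∧ h⁻¹ * K - δ / 2 < h⁻¹ * (K * (1 + ε) ^ ((r:ℝ) - α))
        ∧ ε ∈ Set.Ioo (0:ℝ) 1 := by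
      refine ((hcont1.eventually_lt_const (by linarith)).and
        ((hcont2.eventually_const_lt (by linarith)).and ?_)).mono fun ε hε => ⟨hε.1, hε.2.1, hε.2.2⟩
      have : Set.Ioo (0:ℝ) 1 ∈ 𝓝[>] (0:ℝ) := by
        refine Ioo_mem_nhdsGT ?_
        simp
      exact this  -- membership as eventually
    obtain ⟨ε, hε1, hε2, hε3⟩ := hev.exists
    obtain ⟨hε0, hε1'⟩ := hε3
    -- upper bound function tendsto
    have hU : Tendsto (fun t : ℝ => h⁻¹ * (S ((1 - ε) * t) * t ^ (α - (r:ℝ))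
        + Real.exp ((ε + Real.log (1 - ε)) * t) * h * t ^ (α - (r:ℝ)))) atTop
        (𝓝 (h⁻¹ * (K * (1 - ε) ^ ((r:ℝ) - α)))) := by
      have h1 := hscaled (1 - ε) (by linarith)
      have h2 := (hexp0 (ε + Real.log (1 - ε)) (hδ1 ε hε0 hε1')).mul_const h
      have h3 := (h1.add h2).const_mul h⁻¹
      have h4 : Tendsto (fun t : ℝ => h⁻¹ * (S ((1 - ε) * t) * t ^ (α - (r:ℝ))
          + Real.exp ((ε + Real.log (1 - ε)) * t) * h * t ^ (α - (r:ℝ)))) atTop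
          (𝓝 (h⁻¹ * (K * (1 - ε) ^ ((r:ℝ) - α) + 0 * h))) := h3.congr fun t => by ring
      simpa using h4
    have hL : Tendsto (fun t : ℝ => h⁻¹ * ((1 - (1 + ε) * Real.exp ((Real.log (1 + ε) - ε) * t))
        * (S ((1 + ε) * t) * t ^ (α - (r:ℝ))))) atTop
        (𝓝 (h⁻¹ * (K * (1 + ε) ^ ((r:ℝ) - α)))) := by
      have h1 := hscaled (1 + ε) (by linarith)
      have h2 : Tendsto (fun t : ℝ => 1 - (1 + ε) * Real.exp ((Real.log (1 + ε) - ε) * t))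
          atTop (𝓝 1) := by
        have h4 : Tendsto (fun t : ℝ => Real.exp ((Real.log (1 + ε) - ε) * t)) atTop (𝓝 0) := by
          exact Real.tendsto_exp_atBot.comp
            (Tendsto.const_mul_atTop_of_neg (hδ2 ε hε0) tendsto_id)
        have := (h4.const_mul (1 + ε)).const_sub 1
        simpa using this
      have h3 := (h2.mul h1).const_mul h⁻¹
      have h4 : Tendsto (fun t : ℝ => h⁻¹ * ((1 - (1 + ε) * Real.exp ((Real.log (1 + ε) - ε) * t))
          * (S ((1 + ε) * t) * t ^ (α - (r:ℝ))))) atTop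
          (𝓝 (h⁻¹ * (1 * (K * (1 + ε) ^ ((r:ℝ) - α))))) := h3.congr fun t => by ring
      simpa using h4
    -- combine
    filter_upwards [hU.eventually_lt_const hε1, hL.eventually_const_lt hε2,
      eventually_ge_atTop (1:ℝ)] with t hUt hLt ht1
    have ht0 : (0:ℝ) ≤ t := by linarith
    have htp : (0:ℝ) < t ^ (α - (r:ℝ)) := Real.rpow_pos_of_pos (by linarith) _
    rw [hPid t ht0]
    rw [Real.dist_eq, abs_lt]
    have hub := hΦub ε hε0 hε1' t ht1
    have hlb := hΦlb ε hε0 t ht1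
    constructor
    · -- lower
      have : h⁻¹ * ((1 - (1 + ε) * Real.exp ((Real.log (1 + ε) - ε) * t))
          * (S ((1 + ε) * t) * t ^ (α - (r:ℝ))))
          ≤ h⁻¹ * (∫ ω, Z ω ^ r * pG (⌊t⌋₊ + 1) (Z ω)) * t ^ (α - (r:ℝ)) := by
        have := mul_le_mul_of_nonneg_right hlb htp.le
        calc h⁻¹ * ((1 - (1 + ε) * Real.exp ((Real.log (1 + ε) - ε) * t))
            * (S ((1 + ε) * t) * t ^ (α - (r:ℝ))))
            = h⁻¹ * ((1 - (1 + ε) * Real.exp ((Real.log (1 + ε) - ε) * t))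
              * S ((1 + ε) * t) * t ^ (α - (r:ℝ))) := by ring
          _ ≤ h⁻¹ * ((∫ ω, Z ω ^ r * pG (⌊t⌋₊ + 1) (Z ω)) * t ^ (α - (r:ℝ))) :=
            mul_le_mul_of_nonneg_left this hhinv.le
          _ = h⁻¹ * (∫ ω, Z ω ^ r * pG (⌊t⌋₊ + 1) (Z ω)) * t ^ (α - (r:ℝ)) := by ring
      linarith [lt_of_lt_of_le hLt this]
    · -- upper
      have : h⁻¹ * (∫ ω, Z ω ^ r * pG (⌊t⌋₊ + 1) (Z ω)) * t ^ (α - (r:ℝ))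
          ≤ h⁻¹ * (S ((1 - ε) * t) * t ^ (α - (r:ℝ))
            + Real.exp ((ε + Real.log (1 - ε)) * t) * h * t ^ (α - (r:ℝ))) := by
        have := mul_le_mul_of_nonneg_right hub htp.le
        calc h⁻¹ * (∫ ω, Z ω ^ r * pG (⌊t⌋₊ + 1) (Z ω)) * t ^ (α - (r:ℝ))
            = h⁻¹ * ((∫ ω, Z ω ^ r * pG (⌊t⌋₊ + 1) (Z ω)) * t ^ (α - (r:ℝ))) := by ring
          _ ≤ h⁻¹ * ((S ((1 - ε) * t) + Real.exp ((ε + Real.log (1 - ε)) * t) * h)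
              * t ^ (α - (r:ℝ))) := mul_le_mul_of_nonneg_left this hhinv.le
          _ = h⁻¹ * (S ((1 - ε) * t) * t ^ (α - (r:ℝ))
              + Real.exp ((ε + Real.log (1 - ε)) * t) * h * t ^ (α - (r:ℝ))) := by ring
      linarith [lt_of_le_of_lt this hUt]
  -- final assembly
  have hKform : h⁻¹ * K = h⁻¹ * c * (α / (α - (r:ℝ))) := by rw [hK_def]; ring
  constructor
  · -- Goal 1
    have hden : Tendsto (fun t : ℝ => h⁻¹ * S t * t ^ (α - (r:ℝ))) atTop (𝓝 (h⁻¹ * K)) := by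
      have := hA.const_mul h⁻¹
      refine this.congr fun t => by ring
    have hdiv := hGoal2.div hden (by positivity)
    rw [div_self (by positivity : h⁻¹ * K ≠ 0)] at hdiv
    refine Tendsto.congr' ?_ hdiv
    filter_upwards [eventually_ge_atTop (1:ℝ)] with t ht1
    have htp : t ^ (α - (r:ℝ)) ≠ 0 := (Real.rpow_pos_of_pos (by linarith) _).ne'
    simp only [Pi.div_apply]
    exact mul_div_mul_right _ _ htp
  · rw [← hKform]
    exact hGoal2
end

section
/- Let α ≥ β' > 0 and a, b > 0, and let η, ξ be independent non-negative random variables with P(η > t) = (a + o(1)) t^{-α} and P(ξ > t) = (b + o(1)) t^{-β'} as t → ∞. Put c = a + b if α = β', and c = b if α > β'. Then P(η + ξ > t) = (c + o(1)) t^{-β'} as t → ∞. -/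
open MeasureTheory ProbabilityTheory Filter Real Topology

private lemma tail_zero {g : ℝ → ℝ} {γ a : ℝ} (hγ : 0 < γ)
    (h : Tendsto (fun t => g t * t ^ γ) atTop (𝓝 a)) :
    Tendsto g atTop (𝓝 0) := by
  have h2 : Tendsto (fun t : ℝ => (g t * t ^ γ) * t ^ (-γ)) atTop (𝓝 (a * 0)) :=
    h.mul (tendsto_rpow_neg_atTop hγ)
  rw [mul_zero] at h2
  refine h2.congr' ?_
  filter_upwards [eventually_gt_atTop 0] with t ht
  rw [mul_assoc, ← Real.rpow_add ht, add_neg_cancel, Real.rpow_zero, mul_one]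

private lemma tail_scale {g : ℝ → ℝ} {γ a : ℝ} (hγ : 0 < γ)
    (h : Tendsto (fun t => g t * t ^ γ) atTop (𝓝 a)) {s : ℝ} (hs : 0 < s) :
    Tendsto (fun t => g (s * t) * t ^ γ) atTop (𝓝 (a * s ^ (-γ))) := by
  have hst : Tendsto (fun t : ℝ => s * t) atTop atTop :=
    Tendsto.const_mul_atTop hs tendsto_id
  have hcomp : Tendsto (fun t : ℝ => g (s * t) * (s * t) ^ γ) atTop (𝓝 a) := h.comp hst
  have h2 := hcomp.mul_const (s ^ (-γ))
  refine h2.congr' ?_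
  filter_upwards [eventually_gt_atTop 0] with t ht
  have hone : s ^ γ * s ^ (-γ) = 1 := by
    rw [← Real.rpow_add hs, add_neg_cancel, Real.rpow_zero]
  rw [Real.mul_rpow hs.le ht.le,
    show g (s * t) * (s ^ γ * t ^ γ) * s ^ (-γ) = g (s * t) * t ^ γ * (s ^ γ * s ^ (-γ)) from by
      ring, hone, mul_one]

private lemma tail_beta {g : ℝ → ℝ} {α β a : ℝ} (hβ : 0 < β) (hβα : β ≤ α)
    (h : Tendsto (fun t => g t * t ^ α) atTop (𝓝 a)) {s : ℝ} (hs : 0 < s) :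
    Tendsto (fun t => g (s * t) * t ^ β)
      atTop (𝓝 ((if α = β then a else 0) * s ^ (-β))) := by
  rcases eq_or_lt_of_le hβα with heq | hlt
  · simp only [← heq, if_pos rfl]
    exact heq ▸ tail_scale (hβ.trans_le hβα) h hs
  · have hα : (0:ℝ) < α := hβ.trans hlt
    have h1 := tail_scale hα h hs
    have h2 : Tendsto (fun t : ℝ => t ^ (β - α)) atTop (𝓝 0) := by
      have := tendsto_rpow_neg_atTop (sub_pos.mpr hlt)
      simpa [neg_sub] using this
    have h3 := h1.mul h2
    rw [mul_zero] at h3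
    rw [if_neg hlt.ne', zero_mul]
    refine h3.congr' ?_
    filter_upwards [eventually_gt_atTop 0] with t ht
    rw [mul_assoc, ← Real.rpow_add ht]
    ring_nf

/-- Lemma 4.  Let `α ≥ β' > 0` and `a, b > 0`, let `η, ξ` be
independent non-negative random variables with `P(η > t) = (a + o(1)) t^{-α}`
and `P(ξ > t) = (b + o(1)) t^{-β'}`.  With `c = a + b` if `α = β'` and `c = b`
if `α > β'`, one has `P(η + ξ > t) = (c + o(1)) t^{-β'}` as `t → ∞`. -/
theorem statement5 {Ω : Type*} [MeasureSpace Ω] [IsProbabilityMeasure (ℙ : Measure Ω)]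
    (α β' a b : ℝ) (hβ' : 0 < β') (hβα : β' ≤ α) (ha : 0 < a) (hb : 0 < b)
    (η ξ : Ω → ℝ) (hηmeas : Measurable η) (hξmeas : Measurable ξ)
    (hηnn : ∀ ω, 0 ≤ η ω) (hξnn : ∀ ω, 0 ≤ ξ ω)
    (hindep : IndepFun η ξ ℙ)
    (hηTail : Tendsto (fun t : ℝ => (ℙ {ω | t < η ω}).toReal * t ^ α) atTop (𝓝 a))
    (hξTail : Tendsto (fun t : ℝ => (ℙ {ω | t < ξ ω}).toReal * t ^ β') atTop (𝓝 b)) :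
    Tendsto (fun t : ℝ => (ℙ {ω | t < η ω + ξ ω}).toReal * t ^ β')
      atTop (𝓝 (if α = β' then a + b else b)) := by
  set gη : ℝ → ℝ := fun t => (ℙ {ω | t < η ω}).toReal with hgη
  set gξ : ℝ → ℝ := fun t => (ℙ {ω | t < ξ ω}).toReal with hgξ
  set F : ℝ → ℝ := fun t => (ℙ {ω | t < η ω + ξ ω}).toReal with hgF
  set a' : ℝ := if α = β' then a else 0 with ha'
  set c : ℝ := a' + b with hcdef
  have hcval : (if α = β' then a + b else b) = c := by
    rcases eq_or_ne α β' with h | h <;> simp [hcdef, ha', h]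
  rw [hcval]
  have hcpos : 0 < c := by
    have : 0 ≤ a' := by rcases eq_or_ne α β' with h | h <;> simp [ha', h, ha.le]
    simp only [hcdef]; linarith
  -- independence of the tail events
  have hprod : ∀ s t : ℝ,
      ℙ ({ω | s < η ω} ∩ {ω | t < ξ ω}) = ℙ {ω | s < η ω} * ℙ {ω | t < ξ ω} := by
    intro s t
    exact hindep.measure_inter_preimage_eq_mul (Set.Ioi s) (Set.Ioi t)
      measurableSet_Ioi measurableSet_Ioi
  have hBm : ∀ t : ℝ, MeasurableSet {ω | t < ξ ω} := fun t =>
    hξmeas measurableSet_Ioi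
  -- pointwise lower bound
  have hLow : ∀ t : ℝ, gη t + gξ t - gη t * gξ t ≤ F t := by
    intro t
    have hsub : {ω | t < η ω} ∪ {ω | t < ξ ω} ⊆ {ω | t < η ω + ξ ω} := by
      rintro ω (h | h) <;> simp only [Set.mem_setOf_eq] at * <;>
        nlinarith [hηnn ω, hξnn ω]
    have h1 := measure_union_add_inter (μ := ℙ) {ω | t < η ω} (hBm t)
    have h2 : (ℙ ({ω | t < η ω} ∪ {ω | t < ξ ω})).toReal
        + (ℙ ({ω | t < η ω} ∩ {ω | t < ξ ω})).toReal = gη t + gξ t := by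
      rw [← ENNReal.toReal_add (measure_ne_top _ _) (measure_ne_top _ _),
        ← ENNReal.toReal_add (measure_ne_top _ _) (measure_ne_top _ _), h1]
    have h3 : (ℙ ({ω | t < η ω} ∩ {ω | t < ξ ω})).toReal = gη t * gξ t := by
      rw [hprod, ENNReal.toReal_mul]
    have h4 : (ℙ ({ω | t < η ω} ∪ {ω | t < ξ ω})).toReal ≤ F t :=
      ENNReal.toReal_mono (measure_ne_top _ _) (measure_mono hsub)
    linarith
  -- pointwise upper bound
  have hUp : ∀ δ ∈ Set.Ioo (0:ℝ) 1, ∀ t : ℝ, 0 < t →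
      F t ≤ gη ((1 - δ) * t) + gξ ((1 - δ) * t) + gη (δ * t) * gξ (δ * t) := by
    intro δ hδ t ht
    have hsub : {ω | t < η ω + ξ ω} ⊆
        {ω | (1 - δ) * t < η ω} ∪ {ω | (1 - δ) * t < ξ ω}
          ∪ ({ω | δ * t < η ω} ∩ {ω | δ * t < ξ ω}) := by
      intro ω hω
      simp only [Set.mem_setOf_eq] at hω
      by_cases h1 : (1 - δ) * t < η ω
      · exact Or.inl (Or.inl h1)
      by_cases h2 : (1 - δ) * t < ξ ω
      · exact Or.inl (Or.inr h2)
      · push_neg at h1 h2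
        refine Or.inr ⟨?_, ?_⟩ <;> simp only [Set.mem_setOf_eq] <;> nlinarith
    have hmeas1 : (ℙ {ω | t < η ω + ξ ω}) ≤
        ℙ {ω | (1 - δ) * t < η ω} + ℙ {ω | (1 - δ) * t < ξ ω}
          + ℙ {ω | δ * t < η ω} * ℙ {ω | δ * t < ξ ω} := by
      calc ℙ {ω | t < η ω + ξ ω} ≤ _ := measure_mono hsub
        _ ≤ ℙ ({ω | (1 - δ) * t < η ω} ∪ {ω | (1 - δ) * t < ξ ω})
            + ℙ ({ω | δ * t < η ω} ∩ {ω | δ * t < ξ ω}) := measure_union_le _ _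
        _ ≤ _ := by
            rw [hprod]
            exact add_le_add (measure_union_le (μ := (ℙ : Measure Ω)) _ _) le_rfl
    have hfin : (ℙ {ω | (1 - δ) * t < η ω} + ℙ {ω | (1 - δ) * t < ξ ω}
        + ℙ {ω | δ * t < η ω} * ℙ {ω | δ * t < ξ ω}) ≠ ⊤ := by
      refine ENNReal.add_ne_top.mpr ⟨ENNReal.add_ne_top.mpr
        ⟨measure_ne_top _ _, measure_ne_top _ _⟩,
        ENNReal.mul_ne_top (measure_ne_top _ _) (measure_ne_top _ _)⟩
    have := ENNReal.toReal_mono hfin hmeas1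
    rwa [ENNReal.toReal_add (ENNReal.add_ne_top.mpr
        ⟨measure_ne_top _ _, measure_ne_top _ _⟩)
        (ENNReal.mul_ne_top (measure_ne_top _ _) (measure_ne_top _ _)),
      ENNReal.toReal_add (measure_ne_top _ _) (measure_ne_top _ _),
      ENNReal.toReal_mul] at this
  -- limit of the lower bound
  have hηzero : Tendsto gη atTop (𝓝 0) := tail_zero (hβ'.trans_le hβα) hηTail
  have hLoLim : Tendsto (fun t => (gη t + gξ t - gη t * gξ t) * t ^ β') atTop (𝓝 c) := by
    have h1 : Tendsto (fun t => gη t * t ^ β') atTop (𝓝 a') := by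
      have := tail_beta hβ' hβα hηTail (s := 1) one_pos
      simpa [ha'] using this
    have h2 : Tendsto (fun t => (gη t * gξ t) * t ^ β') atTop (𝓝 0) := by
      have := hηzero.mul hξTail
      rw [zero_mul] at this
      refine this.congr fun t => by ring
    have h3 := (h1.add hξTail).sub h2
    rw [sub_zero] at h3
    exact h3.congr fun t => by ring
  -- limit of the upper bound
  have hUpLim : ∀ δ ∈ Set.Ioo (0:ℝ) 1,
      Tendsto (fun t => (gη ((1 - δ) * t) + gξ ((1 - δ) * t)
        + gη (δ * t) * gξ (δ * t)) * t ^ β')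
        atTop (𝓝 (c * (1 - δ) ^ (-β'))) := by
    intro δ hδ
    have h1δ : (0:ℝ) < 1 - δ := by linarith [hδ.2]
    have h1 : Tendsto (fun t => gη ((1 - δ) * t) * t ^ β')
        atTop (𝓝 (a' * (1 - δ) ^ (-β'))) := by
      have := tail_beta hβ' hβα hηTail (s := 1 - δ) h1δ
      simpa [ha'] using this
    have h2 : Tendsto (fun t => gξ ((1 - δ) * t) * t ^ β')
        atTop (𝓝 (b * (1 - δ) ^ (-β'))) := tail_scale hβ' hξTail h1δ
    have h3 : Tendsto (fun t => (gη (δ * t) * gξ (δ * t)) * t ^ β') atTop (𝓝 0) := by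
      have hz : Tendsto (fun t : ℝ => gη (δ * t)) atTop (𝓝 0) :=
        hηzero.comp (Tendsto.const_mul_atTop hδ.1 tendsto_id)
      have hw : Tendsto (fun t => gξ (δ * t) * t ^ β')
          atTop (𝓝 (b * δ ^ (-β'))) := tail_scale hβ' hξTail hδ.1
      have := hz.mul hw
      rw [zero_mul] at this
      exact this.congr fun t => by ring
    have h4 := (h1.add h2).add h3
    rw [add_zero] at h4
    have : a' * (1 - δ) ^ (-β') + b * (1 - δ) ^ (-β') = c * (1 - δ) ^ (-β') := by
      rw [hcdef]; ring
    rw [this] at h4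
    exact h4.congr fun t => by ring
  -- final ε-argument
  rw [Metric.tendsto_nhds]
  intro ε hε
  -- choose δ
  have hcont : Tendsto (fun δ : ℝ => c * (1 - δ) ^ (-β')) (𝓝[>] 0) (𝓝 c) := by
    have hct : ContinuousAt (fun δ : ℝ => c * (1 - δ) ^ (-β')) 0 := by
      refine ContinuousAt.mul continuousAt_const ?_
      refine ContinuousAt.rpow_const ?_ (Or.inl ?_)
      · exact (continuous_const.sub continuous_id).continuousAt
      · norm_num
    have := hct.continuousWithinAt (s := Set.Ioi (0:ℝ))
    simpa using this.tendsto
  have h4 : ∀ᶠ δ in 𝓝[>] (0:ℝ), c * (1 - δ) ^ (-β') < c + ε / 2 :=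
    hcont.eventually_lt_const (by linarith)
  have h5 : ∀ᶠ δ in 𝓝[>] (0:ℝ), δ ∈ Set.Ioo (0:ℝ) 1 :=
    by filter_upwards [Ioo_mem_nhdsGT (one_pos : (0:ℝ) < 1)] with x hx using hx
  obtain ⟨δ, hδlt, hδIoo⟩ := (h4.and h5).exists
  have evLo : ∀ᶠ t in atTop, c - ε < (gη t + gξ t - gη t * gξ t) * t ^ β' :=
    hLoLim.eventually_const_lt (by linarith)
  have evUp : ∀ᶠ t in atTop, (gη ((1 - δ) * t) + gξ ((1 - δ) * t)
      + gη (δ * t) * gξ (δ * t)) * t ^ β' < c + ε :=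
    (hUpLim δ hδIoo).eventually_lt_const (hδlt.trans (by linarith))
  filter_upwards [evLo, evUp, eventually_gt_atTop (0:ℝ)] with t hlo hup ht
  have htp : (0:ℝ) ≤ t ^ β' := Real.rpow_nonneg ht.le β'
  have hl := mul_le_mul_of_nonneg_right (hLow t) htp
  have hu := mul_le_mul_of_nonneg_right (hUp δ hδIoo t ht) htp
  rw [Real.dist_eq, abs_lt]
  constructor <;> [linarith; linarith]
end

section
/- Let β > 0 and let r ≥ 0 be an integer with b_r = E[Y_1^r] finite and positive, and 0 < a_1 < ∞, 0 < b_1 < ∞. Then for every integer s ≥ 0, E[ Y_1^r · P(d_* = s | Y_1) ] = b_r · P(d_*^{(r)} = s), where conditionally on Y_1 the count Λ_0 is Poisson with mean Y_1 β^{1/2} a_1 and is independent of the i.i.d. sequence (τ_j). -/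
open MeasureTheory ProbabilityTheory Filter Real Topology

noncomputable section

namespace RIG

/-- Poisson probability with mean `a`. -/
def pois (a : ℝ) (s : ℕ) : ℝ := Real.exp (-a) * a ^ s / (s.factorial : ℝ)

/-- `r`-th moment of a distribution on ℝ (so `mom PX r = a_r`, `mom PY r = b_r`). -/
def mom (P : Measure ℝ) (r : ℕ) : ℝ := ∫ x, x ^ r ∂P

/-- λ₁(x) = x β^{-1/2} b₁ : the (conditional) Poisson mean attached to an attribute
of weight `x`. -/
def lamX (PY : Measure ℝ) (β x : ℝ) : ℝ := x * (Real.sqrt β)⁻¹ * mom PY 1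

/-- λ₀(y) = y β^{1/2} a₁ : the (conditional) Poisson mean attached to a vertex
of weight `y`. -/
def lamY (PX : Measure ℝ) (β y : ℝ) : ℝ := y * Real.sqrt β * mom PX 1

/-- pmf of the size-biased mixed Poisson variable Λ₁^{(r)}:
`P(Λ₁^{(r)} = s) = (E λ₁^r)⁻¹ E (e^{-λ₁} λ₁^{s+r} / s!)`, where `λ₁ = X₁ β^{-1/2} b₁`. -/
def pLamX (PX PY : Measure ℝ) (β : ℝ) (r s : ℕ) : ℝ :=
  (∫ x, lamX PY β x ^ r ∂PX)⁻¹ *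
    ∫ x, Real.exp (-lamX PY β x) * lamX PY β x ^ (s + r) / (s.factorial : ℝ) ∂PX

/-- pmf of the size-biased mixed Poisson variable Λ₀^{(r)}:
`P(Λ₀^{(r)} = s) = (E λ₀^r)⁻¹ E (e^{-λ₀} λ₀^{s+r} / s!)`, where `λ₀ = Y₁ β^{1/2} a₁`. -/
def pLamY (PX PY : Measure ℝ) (β : ℝ) (r s : ℕ) : ℝ :=
  (∫ y, lamY PX β y ^ r ∂PY)⁻¹ *
    ∫ y, Real.exp (-lamY PX β y) * lamY PX β y ^ (s + r) / (s.factorial : ℝ) ∂PY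

/-- `E Λ₁`. -/
def eLamX (PX PY : Measure ℝ) (β : ℝ) : ℝ := ∑' s : ℕ, (s : ℝ) * pLamX PX PY β 0 s

/-- pmf of τ: `P(τ = s) = ((s+1)/E Λ₁) P(Λ₁ = s+1)`. -/
def pTau (PX PY : Measure ℝ) (β : ℝ) (s : ℕ) : ℝ :=
  (((s : ℝ) + 1) / eLamX PX PY β) * pLamX PX PY β 0 (s + 1)

/-- pmf of `τ₁ + ⋯ + τ_i` for i.i.d. τⱼ (i-fold convolution of `pTau`). -/
def pTauConv (PX PY : Measure ℝ) (β : ℝ) : ℕ → ℕ → ℝ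
  | 0, s => if s = 0 then 1 else 0
  | i + 1, s =>
      ∑ j ∈ Finset.range (s + 1), pTauConv PX PY β i j * pTau PX PY β (s - j)

/-- pmf of the randomly stopped sum `d_*^{(r)} = Σ_{j=1}^{Λ₀^{(r)}} τ_j`
(with the τⱼ i.i.d. and independent of Λ₀^{(r)}). -/
def pDstar (PX PY : Measure ℝ) (β : ℝ) (r s : ℕ) : ℝ :=
  ∑' i : ℕ, pLamY PX PY β r i * pTauConv PX PY β i s

/-- pmf of `d_* = Σ_{j=1}^{Λ₀} τ_j` conditionally on `Y₁ = y`
(so that Λ₀ is Poisson with mean `λ₀(y)`, independent of the τⱼ). -/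
def pDstarCond (PX PY : Measure ℝ) (β y : ℝ) (s : ℕ) : ℝ :=
  ∑' i : ℕ, pois (lamY PX β y) i * pTauConv PX PY β i s

/-- pmf of `d_*^{(1)} + Λ₁^{(3)}` for independent summands. -/
def pSumA (PX PY : Measure ℝ) (β : ℝ) (s : ℕ) : ℝ :=
  ∑ p ∈ Finset.range (s + 1), pDstar PX PY β 1 p * pLamX PX PY β 3 (s - p)

/-- pmf of `d_*^{(2)} + Λ₁^{(2)} + Λ₂^{(2)}` for independent summands,
`Λ₂^{(2)}` being distributed as `Λ₁^{(2)}`. -/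
def pSumB (PX PY : Measure ℝ) (β : ℝ) (s : ℕ) : ℝ :=
  ∑ p ∈ Finset.range (s + 1), ∑ q ∈ Finset.range (s - p + 1),
    pDstar PX PY β 2 p * pLamX PX PY β 2 q * pLamX PX PY β 2 (s - p - q)

/-- Tail sum `Σ_{i ≥ k} f i` of a pmf `f`. -/
def tailSum (f : ℕ → ℝ) (k : ℕ) : ℝ := ∑' i : ℕ, f (k + i)

/-- `a(k) = a₃ b₁³ P(d_*^{(1)} + Λ₁^{(3)} = k - 2)`. -/
def aFun (PX PY : Measure ℝ) (β : ℝ) (k : ℕ) : ℝ :=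
  mom PX 3 * mom PY 1 ^ 3 * pSumA PX PY β (k - 2)

/-- `b(k) = a₂² b₁² b₂ P(d_*^{(2)} + Λ₁^{(2)} + Λ₂^{(2)} = k - 2)`. -/
def bFun (PX PY : Measure ℝ) (β : ℝ) (k : ℕ) : ℝ :=
  mom PX 2 ^ 2 * mom PY 1 ^ 2 * mom PY 2 * pSumB PX PY β (k - 2)

/-- `A(k) = a₃ b₁³ P(d_*^{(1)} + Λ₁^{(3)} ≥ k - 2)`. -/
def AFun (PX PY : Measure ℝ) (β : ℝ) (k : ℕ) : ℝ :=
  mom PX 3 * mom PY 1 ^ 3 * tailSum (pSumA PX PY β) (k - 2)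

/-- `B(k) = a₂² b₁² b₂ P(d_*^{(2)} + Λ₁^{(2)} + Λ₂^{(2)} ≥ k - 2)`. -/
def BFun (PX PY : Measure ℝ) (β : ℝ) (k : ℕ) : ℝ :=
  mom PX 2 ^ 2 * mom PY 1 ^ 2 * mom PY 2 * tailSum (pSumB PX PY β) (k - 2)

end RIG


namespace RIG

lemma pois_nonneg {a : ℝ} (ha : 0 ≤ a) (t : ℕ) : 0 ≤ pois a t := by
  unfold pois; positivity

lemma pois_le_one {a : ℝ} (ha : 0 ≤ a) (t : ℕ) : pois a t ≤ 1 := by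
  unfold pois
  calc Real.exp (-a) * a ^ t / (t.factorial : ℝ)
      = Real.exp (-a) * (a ^ t / (t.factorial : ℝ)) := by ring
    _ ≤ Real.exp (-a) * Real.exp a := by
        exact mul_le_mul_of_nonneg_left (Real.pow_div_factorial_le_exp a ha t)
          (Real.exp_pos _).le
    _ = 1 := by rw [← Real.exp_add]; simp

lemma pois_hasSum {a : ℝ} (ha : 0 ≤ a) : HasSum (pois a) 1 := by
  have h := ProbabilityTheory.poissonPMFRealSum a.toNNReal
  unfold pois
  simpa [ProbabilityTheory.poissonPMFReal, pois, Real.coe_toNNReal a ha] using h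

lemma continuous_pois (t : ℕ) : Continuous fun a : ℝ => pois a t := by
  unfold pois
  exact ((Real.continuous_exp.comp continuous_neg).mul (continuous_pow t)).div_const _

end RIG

open RIG

/-- the observation in Step 3 of the proof of Theorem 2:
`E(Y₁^r P(d_* = s | Y₁)) = b_r P(d_*^{(r)} = s)`, where conditionally on `Y₁`
the count `Λ₀` is Poisson with mean `Y₁ β^{1/2} a₁`, independent of the i.i.d.
sequence `(τ_j)`. -/
theorem statement14
    (PX PY : Measure ℝ) [IsProbabilityMeasure PX] [IsProbabilityMeasure PY]
    (hXnn : PX {x | x < 0} = 0) (hYnn : PY {y | y < 0} = 0)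
    (β : ℝ) (hβ : 0 < β) (r : ℕ)
    (hbr : Integrable (fun y : ℝ => y ^ r) PY) (hbrpos : 0 < mom PY r)
    (ha1 : Integrable (fun x : ℝ => x) PX) (ha1pos : 0 < mom PX 1)
    (hb1 : Integrable (fun y : ℝ => y) PY) (hb1pos : 0 < mom PY 1)
    (s : ℕ) :
    ∫ y, y ^ r * pDstarCond PX PY β y s ∂PY = mom PY r * pDstar PX PY β r s := by
  -- Notation and positivity setup
  set c := Real.sqrt β * mom PX 1 with hcdef
  have hcpos : 0 < c := mul_pos (Real.sqrt_pos.2 hβ) ha1pos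
  have hlamY : ∀ y : ℝ, lamY PX β y = y * c := fun y => (mul_assoc _ _ _)
  have haeY : ∀ᵐ y ∂PY, 0 ≤ y := by
    rw [ae_iff]; simpa [not_le] using hYnn
  have haeX : ∀ᵐ x ∂PX, 0 ≤ x := by
    rw [ae_iff]; simpa [not_le] using hXnn
  have hlamX_nonneg : ∀ᵐ x ∂PX, 0 ≤ lamX PY β x := by
    filter_upwards [haeX] with x hx
    exact mul_nonneg (mul_nonneg hx (inv_nonneg.2 (Real.sqrt_nonneg β))) hb1pos.le
  have contLamX : Continuous (lamX PY β) := by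
    unfold lamX; exact (continuous_id.mul continuous_const).mul continuous_const
  have contLamY : Continuous (lamY PX β) := by
    unfold lamY; exact (continuous_id.mul continuous_const).mul continuous_const
  -- pLamX with r = 0 facts
  have hplam : ∀ t : ℕ, pLamX PX PY β 0 t = ∫ x, pois (lamX PY β x) t ∂PX := by
    intro t
    have h1 : (∫ x, lamX PY β x ^ (0:ℕ) ∂PX) = 1 := by
      simp
    unfold pLamX
    rw [h1, inv_one, one_mul]
    rfl
  have hIntX : ∀ t : ℕ, Integrable (fun x => pois (lamX PY β x) t) PX := by
    intro t
    refine Integrable.mono' (integrable_const 1)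
      (((continuous_pois t).comp contLamX).aestronglyMeasurable) ?_
    filter_upwards [hlamX_nonneg] with x hx
    rw [Real.norm_of_nonneg (pois_nonneg hx t)]
    exact pois_le_one hx t
  have h0 : ∀ t : ℕ, 0 ≤ pLamX PX PY β 0 t := by
    intro t
    rw [hplam]
    exact integral_nonneg_of_ae (hlamX_nonneg.mono fun x hx => pois_nonneg hx t)
  have h1 : ∀ t : ℕ, pLamX PX PY β 0 t ≤ 1 := by
    intro t
    rw [hplam]
    calc (∫ x, pois (lamX PY β x) t ∂PX) ≤ ∫ _x, (1:ℝ) ∂PX := by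
          refine integral_mono_ae (hIntX t) (integrable_const 1) ?_
          filter_upwards [hlamX_nonneg] with x hx
          exact pois_le_one hx t
      _ = 1 := by simp
  -- eLamX and pTau facts
  have heL_nonneg : 0 ≤ eLamX PX PY β :=
    tsum_nonneg fun t => mul_nonneg (Nat.cast_nonneg t) (h0 t)
  have hTau_nonneg : ∀ t : ℕ, 0 ≤ pTau PX PY β t := fun t =>
    mul_nonneg (div_nonneg (by positivity) heL_nonneg) (h0 _)
  have hTau_sum_le : ∀ n : ℕ, ∑ k ∈ Finset.range n, pTau PX PY β k ≤ 1 := by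
    intro n
    by_cases hE : eLamX PX PY β = 0
    · simp [pTau, hE]
    · have heLpos : 0 < eLamX PX PY β := lt_of_le_of_ne heL_nonneg (Ne.symm hE)
      set u : ℕ → ℝ := fun t => (t : ℝ) * pLamX PX PY β 0 t with hudef
      have hu_nonneg : ∀ t, 0 ≤ u t := fun t => mul_nonneg (Nat.cast_nonneg t) (h0 t)
      have hsumm : Summable u := by
        by_contra h
        exact hE (tsum_eq_zero_of_not_summable h)
      have hpart : ∑ k ∈ Finset.range n, u (k + 1) ≤ eLamX PX PY β := by
        have h2 : ∑ k ∈ Finset.range (n+1), u k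
            = (∑ k ∈ Finset.range n, u (k + 1)) + u 0 := Finset.sum_range_succ' u n
        have h3 : u 0 = 0 := by simp [hudef]
        have h4 : ∑ k ∈ Finset.range (n+1), u k ≤ ∑' t, u t :=
          hsumm.sum_le_tsum _ (fun i _ => hu_nonneg i)
        have h5 : eLamX PX PY β = ∑' t, u t := rfl
        rw [h5]
        rw [h2, h3, add_zero] at h4
        exact h4
      calc ∑ k ∈ Finset.range n, pTau PX PY β k
          = (∑ k ∈ Finset.range n, u (k + 1)) / eLamX PX PY β := by
            rw [Finset.sum_div]
            refine Finset.sum_congr rfl fun k _ => ?_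
            unfold pTau
            simp only [hudef]
            push_cast
            ring
        _ ≤ eLamX PX PY β / eLamX PX PY β := by gcongr
        _ = 1 := div_self hE
  -- pTauConv bounds
  have hconv : ∀ i t : ℕ, 0 ≤ pTauConv PX PY β i t ∧ pTauConv PX PY β i t ≤ 1 := by
    intro i
    induction i with
    | zero =>
      intro t
      unfold pTauConv
      split <;> norm_num
    | succ i ih =>
      intro t
      constructor
      · exact Finset.sum_nonneg fun j _ => mul_nonneg (ih j).1 (hTau_nonneg _)
      · calc ∑ j ∈ Finset.range (t + 1), pTauConv PX PY β i j * pTau PX PY β (t - j)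
            ≤ ∑ j ∈ Finset.range (t + 1), pTau PX PY β (t - j) := by
              refine Finset.sum_le_sum fun j _ => ?_
              exact mul_le_of_le_one_left (hTau_nonneg _) (ih j).2
          _ = ∑ j ∈ Finset.range (t + 1), pTau PX PY β j := by
              rw [← Finset.sum_range_reflect]
              refine Finset.sum_congr rfl fun j hj => ?_
              congr 1
              have := Finset.mem_range.mp hj
              omega
          _ ≤ 1 := hTau_sum_le (t + 1)
  -- integrability of y ^ r * pois (lamY y) i
  have hIi : ∀ i : ℕ, Integrable (fun y => y ^ r * pois (lamY PX β y) i) PY := by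
    intro i
    refine Integrable.mono' hbr
      (((continuous_pow r).mul ((continuous_pois i).comp contLamY)).aestronglyMeasurable) ?_
    filter_upwards [haeY] with y hy
    have hl : 0 ≤ lamY PX β y := by rw [hlamY]; positivity
    rw [Real.norm_of_nonneg (mul_nonneg (pow_nonneg hy r) (pois_nonneg hl i))]
    exact mul_le_of_le_one_right (pow_nonneg hy r) (pois_le_one hl i)
  -- value of each integral
  have hIval : ∀ i : ℕ, ∫ y, y ^ r * pois (lamY PX β y) i ∂PY
      = mom PY r * pLamY PX PY β r i := by
    intro i
    have hcr : (0:ℝ) < c ^ r := pow_pos hcpos r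
    have hA : (∫ y, lamY PX β y ^ r ∂PY) = c ^ r * mom PY r := by
      simp_rw [hlamY, mul_pow]
      rw [integral_mul_const]
      unfold mom; ring
    have hB : (∫ y, Real.exp (-lamY PX β y) * lamY PX β y ^ (i + r) / (i.factorial : ℝ) ∂PY)
        = c ^ r * ∫ y, y ^ r * pois (lamY PX β y) i ∂PY := by
      rw [← integral_const_mul]
      refine integral_congr_ae (Filter.Eventually.of_forall fun y => ?_)
      simp only [hlamY, pois]
      rw [pow_add, mul_pow]
      ring
    unfold pLamY
    rw [hA, hB]
    field_simp
  -- summability of the integrals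
  have hval_nonneg : ∀ i : ℕ, 0 ≤ ∫ y, y ^ r * pois (lamY PX β y) i ∂PY := by
    intro i
    refine integral_nonneg_of_ae ?_
    filter_upwards [haeY] with y hy
    have hl : 0 ≤ lamY PX β y := by rw [hlamY]; positivity
    exact mul_nonneg (pow_nonneg hy r) (pois_nonneg hl i)
  have hS : Summable fun i : ℕ => ∫ y, y ^ r * pois (lamY PX β y) i ∂PY := by
    refine summable_of_sum_range_le (c := mom PY r) hval_nonneg fun n => ?_
    rw [← integral_finset_sum _ (fun i _ => hIi i)]
    have hmono : (∫ y, ∑ i ∈ Finset.range n, y ^ r * pois (lamY PX β y) i ∂PY)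
        ≤ ∫ y, y ^ r ∂PY := by
      refine integral_mono_ae (integrable_finset_sum _ fun i _ => hIi i) hbr ?_
      filter_upwards [haeY] with y hy
      have hl : 0 ≤ lamY PX β y := by rw [hlamY]; positivity
      calc ∑ i ∈ Finset.range n, y ^ r * pois (lamY PX β y) i
          = y ^ r * ∑ i ∈ Finset.range n, pois (lamY PX β y) i := by
            rw [Finset.mul_sum]
        _ ≤ y ^ r * 1 := by
            refine mul_le_mul_of_nonneg_left ?_ (pow_nonneg hy r)
            exact sum_le_hasSum (Finset.range n) (fun i _ => pois_nonneg hl i) (pois_hasSum hl)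
        _ = y ^ r := mul_one _
    exact hmono
  -- the summands
  have hgInt : ∀ i : ℕ,
      Integrable (fun y => y ^ r * pois (lamY PX β y) i * pTauConv PX PY β i s) PY :=
    fun i => (hIi i).mul_const _
  have hgNorm : Summable fun i : ℕ =>
      ∫ y, ‖y ^ r * pois (lamY PX β y) i * pTauConv PX PY β i s‖ ∂PY := by
    refine Summable.of_nonneg_of_le
      (fun i => integral_nonneg fun y => norm_nonneg _) (fun i => ?_) hS
    refine integral_mono_ae (hgInt i).norm (hIi i) ?_
    filter_upwards [haeY] with y hy
    have hl : 0 ≤ lamY PX β y := by rw [hlamY]; positivity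
    have hnn : 0 ≤ y ^ r * pois (lamY PX β y) i * pTauConv PX PY β i s :=
      mul_nonneg (mul_nonneg (pow_nonneg hy r) (pois_nonneg hl i)) (hconv i s).1
    rw [Real.norm_of_nonneg hnn]
    exact mul_le_of_le_one_right (mul_nonneg (pow_nonneg hy r) (pois_nonneg hl i)) (hconv i s).2
  -- main computation
  calc ∫ y, y ^ r * pDstarCond PX PY β y s ∂PY
      = ∫ y, ∑' i : ℕ, y ^ r * pois (lamY PX β y) i * pTauConv PX PY β i s ∂PY := by
        refine integral_congr_ae (Filter.Eventually.of_forall fun y => ?_)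
        unfold pDstarCond
        refine Eq.trans tsum_mul_left.symm ?_
        exact tsum_congr fun i => (mul_assoc _ _ _).symm
    _ = ∑' i : ℕ, ∫ y, y ^ r * pois (lamY PX β y) i * pTauConv PX PY β i s ∂PY :=
        (integral_tsum_of_summable_integral_norm hgInt hgNorm).symm
    _ = ∑' i : ℕ, mom PY r * pLamY PX PY β r i * pTauConv PX PY β i s := by
        refine tsum_congr fun i => ?_
        rw [integral_mul_const, hIval i]
    _ = mom PY r * pDstar PX PY β r s := by
        unfold pDstar
        refine Eq.trans ?_ tsum_mul_left
        exact tsum_congr fun i => by ring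
end
end
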